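/- arXiv:1608.08355 — 3 statements merged into one kernel-verified Lean document; each statement's English description precedes it below -/
import Mathlib

section
/- Let n be a positive integer and let T : Hₙ → Hₙ be a left ℍ-linear map, where Hₙ = (Fin n → ℍ). Then the following are equivalent: (a) T is normal, i.e. there exists a left ℍ-linear map T' : Hₙ → Hₙ with ⟪T u, v⟫ = ⟪u, T' v⟫ for all u, v and T ∘ T' = T' ∘ T; (b) there exist an orthonormal family ξ₁, …, ξₙ ∈ Hₙ (⟪ξ_k, ξ_l⟫ = 1 if k = l and 0 otherwise) and quaternions λ₁, …, λₙ ∈ ℂ_i⁺ such that T ξ_k = λ_k • ξ_k for every k, and T u = Σ_{k=1}^{n} (⟪u, ξ_k⟫ · λ_k) • ξ_k for every u ∈ Hₙ. -/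
open Finset Quaternion

/-- The quaternion-valued inner product on `Hₙ = (Fin n → ℍ)`:
`⟪u, v⟫ = Σ_k u(k) · conj(v(k))`. -/
noncomputable def qInnerFin {n : ℕ} (u v : Fin n → Quaternion ℝ) : Quaternion ℝ :=
  ∑ k, u k * star (v k)

/-- embedding ℂ → ℍ -/
def cq (z : ℂ) : Quaternion ℝ := ⟨z.re, z.im, 0, 0⟩

/-- first complex component -/
def qc (q : Quaternion ℝ) : ℂ := ⟨q.re, q.imI⟩
/-- second complex component -/
def qc2 (q : Quaternion ℝ) : ℂ := ⟨q.imJ, q.imK⟩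

def jq : Quaternion ℝ := ⟨0, 0, 1, 0⟩

@[simp] lemma jq_re : jq.re = 0 := rfl
@[simp] lemma jq_imI : jq.imI = 0 := rfl
@[simp] lemma jq_imJ : jq.imJ = 1 := rfl
@[simp] lemma jq_imK : jq.imK = 0 := rfl

@[simp] lemma cq_re (z : ℂ) : (cq z).re = z.re := rfl
@[simp] lemma cq_imI (z : ℂ) : (cq z).imI = z.im := rfl
@[simp] lemma cq_imJ (z : ℂ) : (cq z).imJ = 0 := rfl
@[simp] lemma cq_imK (z : ℂ) : (cq z).imK = 0 := rfl
@[simp] lemma qc_re (q : Quaternion ℝ) : (qc q).re = q.re := rfl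
@[simp] lemma qc_im (q : Quaternion ℝ) : (qc q).im = q.imI := rfl
@[simp] lemma qc2_re (q : Quaternion ℝ) : (qc2 q).re = q.imJ := rfl
@[simp] lemma qc2_im (q : Quaternion ℝ) : (qc2 q).im = q.imK := rfl

lemma cq_add (z w : ℂ) : cq (z + w) = cq z + cq w := by
  ext <;> simp
lemma cq_mul (z w : ℂ) : cq (z * w) = cq z * cq w := by
  ext <;> simp [Complex.mul_re, Complex.mul_im] <;> ring
lemma cq_one : cq 1 = 1 := by ext <;> simp
lemma cq_zero : cq 0 = 0 := by ext <;> simp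

def cqHom : ℂ →+* Quaternion ℝ where
  toFun := cq
  map_one' := cq_one
  map_mul' := cq_mul
  map_zero' := cq_zero
  map_add' := cq_add

noncomputable instance : Module ℂ (Quaternion ℝ) := Module.compHom _ cqHom

lemma csmul_def (z : ℂ) (q : Quaternion ℝ) : z • q = cq z * q := rfl

example (n : ℕ) (z : ℂ) (u : Fin n → Quaternion ℝ) (k : Fin n) : (z • u) k = cq z * u k := rfl
example (n : ℕ) (p : Quaternion ℝ) (u : Fin n → Quaternion ℝ) (k : Fin n) : (p • u) k = p * u k := rfl
example (n : ℕ) (z : ℂ) (u : Fin n → Quaternion ℝ) : z • u = cq z • u := rfl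

lemma cq_conj (z : ℂ) : cq ((starRingEnd ℂ) z) = star (cq z) := by
  ext <;> simp

lemma qc_add (p q : Quaternion ℝ) : qc (p + q) = qc p + qc q := by
  simp [Complex.ext_iff]
lemma qc2_add (p q : Quaternion ℝ) : qc2 (p + q) = qc2 p + qc2 q := by
  simp [Complex.ext_iff]
@[simp] lemma qc_zero : qc 0 = 0 := by simp [Complex.ext_iff]
@[simp] lemma qc2_zero : qc2 0 = 0 := by simp [Complex.ext_iff]
@[simp] lemma qc_one : qc 1 = 1 := by simp [Complex.ext_iff]
@[simp] lemma qc2_one : qc2 1 = 0 := by simp [Complex.ext_iff]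

lemma qc_cq_mul (z : ℂ) (q : Quaternion ℝ) : qc (cq z * q) = z * qc q := by
  simp [Complex.ext_iff, Complex.mul_re, Complex.mul_im]
lemma qc2_cq_mul (z : ℂ) (q : Quaternion ℝ) : qc2 (cq z * q) = z * qc2 q := by
  simp [Complex.ext_iff, Complex.mul_re, Complex.mul_im]
lemma qc_mul_cq (z : ℂ) (q : Quaternion ℝ) : qc (q * cq z) = qc q * z := by
  simp [Complex.ext_iff, Complex.mul_re, Complex.mul_im]
lemma qc_star (q : Quaternion ℝ) : qc (star q) = (starRingEnd ℂ) (qc q) := by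
  simp [Complex.ext_iff]

lemma q_decomp (q : Quaternion ℝ) : q = cq (qc q) + cq (qc2 q) * jq := by
  ext <;> simp

lemma jq_mul_jq : jq * jq = -1 := by ext <;> simp
lemma star_jq : star jq = -jq := by ext <;> simp
lemma jq_mul_cq (z : ℂ) : jq * cq z = cq ((starRingEnd ℂ) z) * jq := by
  ext <;> simp

lemma qc_mul_neg_jq (q : Quaternion ℝ) : qc (q * (-jq)) = qc2 q := by
  simp [Complex.ext_iff]
lemma qc_jq_mul_mul_neg_jq (q : Quaternion ℝ) : qc (jq * q * (-jq)) = (starRingEnd ℂ) (qc q) := by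
  simp [Complex.ext_iff]

section Inner
variable {n : ℕ}

local notation "V" => Fin n → Quaternion ℝ

lemma qInner_add_left (u v w : V) : qInnerFin (u + v) w = qInnerFin u w + qInnerFin v w := by
  simp [qInnerFin, add_mul, Finset.sum_add_distrib]
lemma qInner_add_right (u v w : V) : qInnerFin u (v + w) = qInnerFin u v + qInnerFin u w := by
  simp [qInnerFin, mul_add, Finset.sum_add_distrib]
lemma qInner_qsmul_left (q : Quaternion ℝ) (u v : V) :
    qInnerFin (q • u) v = q * qInnerFin u v := by
  simp [qInnerFin, Finset.mul_sum, mul_assoc]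
lemma qInner_qsmul_right (q : Quaternion ℝ) (u v : V) :
    qInnerFin u (q • v) = qInnerFin u v * star q := by
  simp [qInnerFin, Finset.sum_mul, mul_assoc]
lemma star_qInner (u v : V) : star (qInnerFin u v) = qInnerFin v u := by
  simp [qInnerFin, star_sum, mul_comm]
lemma qInner_zero_left (v : V) : qInnerFin 0 v = 0 := by simp [qInnerFin]
lemma qInner_zero_right (v : V) : qInnerFin v 0 = 0 := by simp [qInnerFin]
lemma qInner_self (u : V) : qInnerFin u u = ((∑ k, normSq (u k) : ℝ) : Quaternion ℝ) := by
  rw [qInnerFin]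
  simp only [Quaternion.self_mul_star]
  exact_mod_cast (map_sum (algebraMap ℝ (Quaternion ℝ)) (fun k => normSq (u k)) Finset.univ).symm
lemma qInner_self_eq_zero {u : V} (h : qInnerFin u u = 0) : u = 0 := by
  rw [qInner_self] at h
  have h0 : (∑ k, normSq (u k) : ℝ) = 0 := by
    exact_mod_cast congrArg QuaternionAlgebra.re h
  have : ∀ k ∈ Finset.univ, normSq (u k) = 0 := by
    intro k _
    have := Finset.sum_eq_zero_iff_of_nonneg (fun k _ => normSq_nonneg (a := u k)) |>.mp h0
    exact this k (Finset.mem_univ k)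
  funext k
  exact normSq_eq_zero.mp (this k (Finset.mem_univ k))

/-- complex part of the quaternionic inner product -/
noncomputable def hC (u v : V) : ℂ := qc (qInnerFin u v)

lemma hC_add_left (u v w : V) : hC (u + v) w = hC u w + hC v w := by
  simp [hC, qInner_add_left, qc_add]
lemma hC_add_right (u v w : V) : hC u (v + w) = hC u v + hC u w := by
  simp [hC, qInner_add_right, qc_add]
lemma hC_csmul_left (z : ℂ) (u v : V) : hC (z • u) v = z * hC u v := by
  have : z • u = cq z • u := rfl
  rw [hC, this, qInner_qsmul_left, qc_cq_mul]; rfl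
lemma hC_csmul_right (z : ℂ) (u v : V) : hC u (z • v) = hC u v * (starRingEnd ℂ) z := by
  have : z • v = cq z • v := rfl
  rw [hC, this, qInner_qsmul_right, ← cq_conj, qc_mul_cq]; rfl
lemma hC_conj (u v : V) : hC v u = (starRingEnd ℂ) (hC u v) := by
  rw [hC, hC, ← star_qInner u v, qc_star]
lemma hC_self (u : V) : hC u u = ((∑ k, normSq (u k) : ℝ) : ℂ) := by
  rw [hC, qInner_self]; simp [Complex.ext_iff]
lemma hC_zero_right (u : V) : hC u 0 = 0 := by simp [hC, qInner_zero_right]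

/-- the quaternionic structure map: left multiplication by j -/
noncomputable def Jq (u : V) : V := jq • u

lemma hC_J_right (u v : V) : hC u (Jq v) = qc2 (qInnerFin u v) := by
  rw [hC, Jq, qInner_qsmul_right, star_jq, qc_mul_neg_jq]
lemma hC_J_J (u v : V) : hC (Jq u) (Jq v) = (starRingEnd ℂ) (hC u v) := by
  rw [hC, Jq, Jq, qInner_qsmul_left, qInner_qsmul_right, star_jq, ← mul_assoc,
    qc_jq_mul_mul_neg_jq]; rfl
lemma qInner_decomp (u v : V) :
    qInnerFin u v = cq (hC u v) + cq (hC u (Jq v)) * jq := by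
  rw [hC, hC_J_right]; exact q_decomp _
lemma Jq_add (u v : V) : Jq (u + v) = Jq u + Jq v := smul_add _ _ _
lemma Jq_csmul (z : ℂ) (u : V) : Jq (z • u) = ((starRingEnd ℂ) z) • Jq u := by
  funext k
  show jq * (cq z * u k) = cq ((starRingEnd ℂ) z) * (jq * u k)
  rw [← mul_assoc, ← mul_assoc, jq_mul_cq]
lemma Jq_Jq (u : V) : Jq (Jq u) = -u := by
  funext k
  show jq * (jq * u k) = -u k
  rw [← mul_assoc, jq_mul_jq, neg_one_mul]
lemma qc_neg (q : Quaternion ℝ) : qc (-q) = -qc q := by simp [Complex.ext_iff]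

lemma qInner_neg_right (u v : V) : qInnerFin u (-v) = -qInnerFin u v := by
  simp [qInnerFin]

lemma hC_neg_right (u v : V) : hC u (-v) = -hC u v := by
  rw [hC, qInner_neg_right, qc_neg]; rfl

lemma hC_J_left (u v : V) : hC (Jq u) v = -(starRingEnd ℂ) (hC u (Jq v)) := by
  have h1 : hC (Jq u) v = hC (Jq u) (-Jq (Jq v)) := by rw [Jq_Jq, neg_neg]
  rw [h1, hC_neg_right, hC_J_J]

lemma hC_self_J (u : V) : hC u (Jq u) = 0 := by
  have h1 : hC (Jq u) (Jq (Jq u)) = (starRingEnd ℂ) (hC u (Jq u)) := hC_J_J _ _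
  rw [Jq_Jq, hC_neg_right, hC_conj u (Jq u)] at h1
  have h2 : (starRingEnd ℂ) (hC u (Jq u)) = 0 := by
    have := h1
    linear_combination (-(1:ℂ)/2) * h1
  have := congrArg (starRingEnd ℂ) h2
  rwa [Complex.conj_conj, map_zero] at this

/-- ℂ-linear equivalence with ℂ^(n×2) -/
noncomputable def cEquiv : (Fin n × Fin 2 → ℂ) ≃ₗ[ℂ] (Fin n → Quaternion ℝ) where
  toFun f := fun k => cq (f (k, 0)) + cq (f (k, 1)) * jq
  invFun u := fun p => if p.2 = 0 then qc (u p.1) else qc2 (u p.1)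
  map_add' f g := by
    funext k
    show cq (f (k,0) + g (k,0)) + cq (f (k,1) + g (k,1)) * jq = _
    rw [cq_add, cq_add]; show _ = (cq (f (k,0)) + cq (f (k,1)) * jq) + (cq (g (k,0)) + cq (g (k,1)) * jq)
    noncomm_ring
  map_smul' z f := by
    funext k
    show cq (z * f (k,0)) + cq (z * f (k,1)) * jq = cq z * (cq (f (k,0)) + cq (f (k,1)) * jq)
    rw [cq_mul, cq_mul]; noncomm_ring
  left_inv f := by
    funext p
    rcases p with ⟨k, s⟩
    fin_cases s <;> simp only []
    · show (if (0 : Fin 2) = 0 then qc _ else qc2 _) = _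
      rw [if_pos rfl]
      simp [Complex.ext_iff]
    · show (if (1 : Fin 2) = 0 then qc _ else qc2 _) = _
      rw [if_neg (by decide)]
      simp [Complex.ext_iff]
  right_inv u := by
    funext k
    show cq (if (0:Fin 2) = 0 then qc (u k) else qc2 (u k)) +
      cq (if (1:Fin 2) = 0 then qc (u k) else qc2 (u k)) * jq = u k
    rw [if_pos rfl, if_neg (by decide)]
    exact (q_decomp (u k)).symm

noncomputable instance : FiniteDimensional ℂ (Fin n → Quaternion ℝ) :=
  Module.Finite.equiv (cEquiv (n := n))

lemma finrank_V : Module.finrank ℂ (Fin n → Quaternion ℝ) = 2 * n := by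
  rw [← (cEquiv (n := n)).finrank_eq]
  simp [Module.finrank_pi, mul_comm]
end Inner

/-- A map `T : Hₙ → Hₙ` is left ℍ-linear. -/
def LeftHLinear {n : ℕ} (T : (Fin n → Quaternion ℝ) → (Fin n → Quaternion ℝ)) : Prop :=
  ∀ (p q : Quaternion ℝ) (u v : Fin n → Quaternion ℝ),
    T (p • u + q • v) = p • T u + q • T v

section Op
variable {n : ℕ} {T : (Fin n → Quaternion ℝ) → (Fin n → Quaternion ℝ)}

lemma LH_zero (hT : LeftHLinear T) : T 0 = 0 := by
  have := hT 0 0 0 0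
  simpa using this

lemma LH_qsmul (hT : LeftHLinear T) (q : Quaternion ℝ) (u : Fin n → Quaternion ℝ) : T (q • u) = q • T u := by
  have := hT q 0 u 0
  simpa [LH_zero hT] using this

lemma LH_add (hT : LeftHLinear T) (u v : Fin n → Quaternion ℝ) : T (u + v) = T u + T v := by
  have := hT 1 1 u v
  simpa using this

lemma LH_csmul (hT : LeftHLinear T) (z : ℂ) (u : Fin n → Quaternion ℝ) : T (z • u) = z • T u :=
  LH_qsmul hT (cq z) u

/-- T as a ℂ-linear map -/
noncomputable def toLin (hT : LeftHLinear T) : (Fin n → Quaternion ℝ) →ₗ[ℂ] (Fin n → Quaternion ℝ) where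
  toFun := T
  map_add' := LH_add hT
  map_smul' := LH_csmul hT

@[simp] lemma toLin_apply (hT : LeftHLinear T) (u : Fin n → Quaternion ℝ) : toLin hT u = T u := rfl

lemma LH_comm_J (hT : LeftHLinear T) (u : Fin n → Quaternion ℝ) : T (Jq u) = Jq (T u) := LH_qsmul hT jq u

/-- the functional u ↦ hC u w as a ℂ-linear map -/
noncomputable def hCL (w : Fin n → Quaternion ℝ) : (Fin n → Quaternion ℝ) →ₗ[ℂ] ℂ where
  toFun u := hC u w
  map_add' u v := hC_add_left u v w
  map_smul' z u := hC_csmul_left z u w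

@[simp] lemma hCL_apply (w u : Fin n → Quaternion ℝ) : hCL w u = hC u w := rfl
end Op

section Normal
variable {n : ℕ} {T T' : (Fin n → Quaternion ℝ) → (Fin n → Quaternion ℝ)}

lemma hC_self_eq_zero {u : Fin n → Quaternion ℝ} (h : hC u u = 0) : u = 0 := by
  rw [hC_self] at h
  have h0 : (∑ k, normSq (u k) : ℝ) = 0 := by exact_mod_cast h
  apply qInner_self_eq_zero
  rw [qInner_self, h0]
  simp

lemma LH_sub (hT : LeftHLinear T) (u v : Fin n → Quaternion ℝ) : T (u - v) = T u - T v := by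
  have h1 : u - v = u + (-1 : Quaternion ℝ) • v := by
    rw [sub_eq_add_neg, neg_smul, one_smul]
  rw [h1, LH_add hT, LH_qsmul hT, neg_smul, one_smul, sub_eq_add_neg]

lemma hC_adj (hadj : ∀ u v, qInnerFin (T u) v = qInnerFin u (T' v)) (u v : Fin n → Quaternion ℝ) :
    hC (T u) v = hC u (T' v) := congrArg qc (hadj u v)

lemma hC_adj' (hadj : ∀ u v, qInnerFin (T u) v = qInnerFin u (T' v)) (u v : Fin n → Quaternion ℝ) :
    hC (T' u) v = hC u (T v) := by
  calc hC (T' u) v = (starRingEnd ℂ) (hC v (T' u)) := hC_conj v (T' u)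
    _ = (starRingEnd ℂ) (hC (T v) u) := by rw [hC_adj hadj]
    _ = hC u (T v) := by rw [hC_conj u (T v), Complex.conj_conj]

lemma eigen_adjoint (hT : LeftHLinear T) (hT' : LeftHLinear T')
    (hadj : ∀ u v, qInnerFin (T u) v = qInnerFin u (T' v))
    (hcomm : ∀ u, T (T' u) = T' (T u))
    {w : Fin n → Quaternion ℝ} {μ : ℂ} (hw : T w = μ • w) :
    T' w = (starRingEnd ℂ) μ • w := by
  set s : (Fin n → Quaternion ℝ) → (Fin n → Quaternion ℝ) := fun u => T u - μ • u with hs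
  set s' : (Fin n → Quaternion ℝ) → (Fin n → Quaternion ℝ) :=
    fun u => T' u - (starRingEnd ℂ) μ • u with hs'
  have hrel : ∀ a b, hC (s' a) b = hC a (s b) := by
    intro a b
    show hC (T' a - (starRingEnd ℂ) μ • a) b = hC a (T b - μ • b)
    rw [sub_eq_add_neg, ← neg_smul, sub_eq_add_neg (T b), ← neg_smul,
      hC_add_left, hC_add_right, hC_csmul_left, hC_csmul_right, hC_adj' hadj, map_neg]
    ring
  have hsw : s w = 0 := by
    show T w - μ • w = 0
    rw [hw]; simp
  have hs'0 : s' 0 = 0 := by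
    show T' 0 - _ • (0 : Fin n → Quaternion ℝ) = 0
    rw [LH_zero hT']; simp
  have hscomm : s (s' w) = s' (s w) := by
    show T (T' w - (starRingEnd ℂ) μ • w) - μ • (T' w - (starRingEnd ℂ) μ • w)
      = T' (T w - μ • w) - (starRingEnd ℂ) μ • (T w - μ • w)
    rw [LH_sub hT, LH_sub hT', LH_csmul hT, LH_csmul hT', hcomm, smul_sub, smul_sub,
      smul_smul, smul_smul, mul_comm]
    abel
  have key : hC (s' w) (s' w) = 0 := by
    rw [hrel w (s' w), hscomm, hsw, hs'0, hC_zero_right]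
  have h0 : s' w = 0 := hC_self_eq_zero key
  exact sub_eq_zero.mp h0
end Normal

section Helpers
variable {n : ℕ} {T : (Fin n → Quaternion ℝ) → (Fin n → Quaternion ℝ)}

lemma qInner_sub_left (u v w : Fin n → Quaternion ℝ) :
    qInnerFin (u - v) w = qInnerFin u w - qInnerFin v w := by
  simp [qInnerFin, sub_mul, Finset.sum_sub_distrib]

lemma hC_sub_left (u v w : Fin n → Quaternion ℝ) :
    hC (u - v) w = hC u w - hC v w := by
  rw [hC, hC, hC, qInner_sub_left]
  simp [Complex.ext_iff]

/-- decomposition of a quaternionic scalar multiple into complex pieces -/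
lemma qsmul_decomp (q : Quaternion ℝ) (w : Fin n → Quaternion ℝ) :
    q • w = (qc q) • w + (qc2 q) • (Jq w) := by
  funext k
  show q * w k = cq (qc q) * w k + cq (qc2 q) * (jq * w k)
  conv_lhs => rw [q_decomp q]
  noncomm_ring

lemma hC_qsmul_left (q : Quaternion ℝ) (w v : Fin n → Quaternion ℝ) :
    hC (q • w) v = qc q * hC w v + qc2 q * hC (Jq w) v := by
  rw [qsmul_decomp, hC_add_left, hC_csmul_left, hC_csmul_left]

/-- sum over Fin (m+1) with Fin.cons -/
lemma LH_sum (hT : LeftHLinear T) {ι : Type*} (s : Finset ι)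
    (f : ι → (Fin n → Quaternion ℝ)) : T (∑ i ∈ s, f i) = ∑ i ∈ s, T (f i) :=
  map_sum (toLin hT) f s
end Helpers

section Core
variable {n : ℕ} {T T' : (Fin n → Quaternion ℝ) → (Fin n → Quaternion ℝ)}

lemma core (hT : LeftHLinear T) (hT' : LeftHLinear T')
    (hadj : ∀ u v, qInnerFin (T u) v = qInnerFin u (T' v))
    (hcomm : ∀ u, T (T' u) = T' (T u)) :
    ∀ (N : ℕ) (W : Submodule ℂ (Fin n → Quaternion ℝ)),
      Module.finrank ℂ W ≤ N →
      (∀ u ∈ W, T u ∈ W) → (∀ u ∈ W, T' u ∈ W) → (∀ u ∈ W, Jq u ∈ W) →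
      ∃ (m : ℕ) (ξ : Fin m → (Fin n → Quaternion ℝ)) (μs : Fin m → ℂ),
        (∀ s, ξ s ∈ W) ∧
        (∀ s t, qInnerFin (ξ s) (ξ t) = if s = t then 1 else 0) ∧
        (∀ s, 0 ≤ (μs s).im) ∧
        (∀ s, T (ξ s) = (μs s) • ξ s) ∧
        (∀ u ∈ W, u = ∑ s, qInnerFin u (ξ s) • ξ s) := by
  intro N
  induction N with
  | zero =>
    intro W hrank _ _ _
    refine ⟨0, Fin.elim0, Fin.elim0, ?_, ?_, ?_, ?_, ?_⟩ <;>
      try (intro s; exact s.elim0)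
    intro u hu
    have hW : W = ⊥ := by
      have := Nat.le_zero.mp hrank
      exact Submodule.finrank_eq_zero.mp this
    rw [hW] at hu
    simpa using hu
  | succ N ih =>
    intro W hrank hTW hT'W hJW
    by_cases hbot : W = ⊥
    · refine ⟨0, Fin.elim0, Fin.elim0, ?_, ?_, ?_, ?_, ?_⟩ <;>
        try (intro s; exact s.elim0)
      intro u hu
      rw [hbot] at hu
      simpa using hu
    · -- find an eigenvector
      haveI : Nontrivial W := Submodule.nontrivial_iff_ne_bot.mpr hbot
      set f : W →ₗ[ℂ] W := (toLin hT).restrict hTW with hf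
      obtain ⟨μ₀, hμ₀⟩ := Module.End.exists_eigenvalue f
      obtain ⟨w₀', hw₀'⟩ := hμ₀.exists_hasEigenvector
      have hw₀mem : (w₀' : Fin n → Quaternion ℝ) ∈ W := w₀'.2
      have hw₀ne : (w₀' : Fin n → Quaternion ℝ) ≠ 0 := by
        intro h
        exact hw₀'.2 (Subtype.coe_injective h)
      have hw₀eig : T (w₀' : Fin n → Quaternion ℝ) = μ₀ • (w₀' : Fin n → Quaternion ℝ) := by
        have h1 := hw₀'.apply_eq_smul
        have := congrArg (Subtype.val) h1
        exact this
      -- normalize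
      set S : ℝ := ∑ k, normSq ((w₀' : Fin n → Quaternion ℝ) k) with hS
      have hSnn : 0 ≤ S := Finset.sum_nonneg fun k _ => normSq_nonneg
      have hSpos : 0 < S := by
        rcases hSnn.lt_or_eq with h | h
        · exact h
        · exfalso
          apply hw₀ne
          apply qInner_self_eq_zero
          rw [qInner_self, ← hS, ← h]
          simp
      set r : ℝ := Real.sqrt S with hr
      have hrpos : 0 < r := Real.sqrt_pos.mpr hSpos
      set w₁ : Fin n → Quaternion ℝ := ((r⁻¹ : ℝ) : ℂ) • (w₀' : Fin n → Quaternion ℝ) with hw₁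
      have hw₁mem : w₁ ∈ W := Submodule.smul_mem W _ hw₀mem
      have hw₁eig : T w₁ = μ₀ • w₁ := by
        rw [hw₁, LH_csmul hT, hw₀eig, smul_comm]
      have hrr : r * r = S := Real.mul_self_sqrt hSpos.le
      have hw₁norm : hC w₁ w₁ = 1 := by
        rw [hw₁, hC_csmul_left, hC_csmul_right, hC_self, ← hS]
        rw [Complex.conj_ofReal]
        have h1 : r⁻¹ * (S * r⁻¹) = 1 := by
          field_simp
          linarith [hrr]
        calc ((r⁻¹ : ℝ) : ℂ) * (((S : ℝ) : ℂ) * ((r⁻¹ : ℝ) : ℂ))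
            = ((r⁻¹ * (S * r⁻¹) : ℝ) : ℂ) := by push_cast; ring
          _ = 1 := by rw [h1]; norm_num
      -- orient the eigenvalue
      obtain ⟨w, μ, hwmem, hweig, hwnorm, him⟩ :
          ∃ (w : Fin n → Quaternion ℝ) (μ : ℂ), w ∈ W ∧ T w = μ • w ∧ hC w w = 1 ∧ 0 ≤ μ.im := by
        by_cases hcase : 0 ≤ μ₀.im
        · exact ⟨w₁, μ₀, hw₁mem, hw₁eig, hw₁norm, hcase⟩
        · refine ⟨Jq w₁, (starRingEnd ℂ) μ₀, hJW _ hw₁mem, ?_, ?_, ?_⟩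
          · rw [LH_comm_J hT, hw₁eig, Jq_csmul]
          · rw [hC_J_J, hw₁norm, map_one]
          · simp [Complex.conj_im]
            linarith
      have hT'w : T' w = (starRingEnd ℂ) μ • w := eigen_adjoint hT hT' hadj hcomm hweig
      have hJwmem : Jq w ∈ W := hJW _ hwmem
      have hTJw : T (Jq w) = (starRingEnd ℂ) μ • Jq w := by
        rw [LH_comm_J hT, hweig, Jq_csmul]
      have hT'Jw : T' (Jq w) = μ • Jq w := by
        have := eigen_adjoint hT hT' hadj hcomm hTJw
        rwa [Complex.conj_conj] at this
      have hwJw : hC w (Jq w) = 0 := hC_self_J w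
      have hJww : hC (Jq w) w = 0 := by
        rw [hC_conj, hwJw, map_zero]
      have hJwJw : hC (Jq w) (Jq w) = 1 := by
        rw [hC_J_J, hwnorm, map_one]
      -- the smaller invariant subspace
      set W' : Submodule ℂ (Fin n → Quaternion ℝ) :=
        W ⊓ LinearMap.ker (hCL w) ⊓ LinearMap.ker (hCL (Jq w)) with hW'
      have hmemW' : ∀ u, u ∈ W' ↔ u ∈ W ∧ hC u w = 0 ∧ hC u (Jq w) = 0 := by
        intro u
        simp [hW', LinearMap.mem_ker, and_assoc]
      have hW'leW : W' ≤ W := by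
        intro u hu
        exact ((hmemW' u).mp hu).1
      have hTW' : ∀ u ∈ W', T u ∈ W' := by
        intro u hu
        obtain ⟨h1, h2, h3⟩ := (hmemW' u).mp hu
        refine (hmemW' _).mpr ⟨hTW u h1, ?_, ?_⟩
        · rw [hC_adj hadj, hT'w, hC_csmul_right, h2, zero_mul]
        · rw [hC_adj hadj, hT'Jw, hC_csmul_right, h3, zero_mul]
      have hT'W' : ∀ u ∈ W', T' u ∈ W' := by
        intro u hu
        obtain ⟨h1, h2, h3⟩ := (hmemW' u).mp hu
        refine (hmemW' _).mpr ⟨hT'W u h1, ?_, ?_⟩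
        · rw [hC_adj' hadj, hweig, hC_csmul_right, h2, zero_mul]
        · rw [hC_adj' hadj, hTJw, hC_csmul_right, h3, zero_mul]
      have hJW' : ∀ u ∈ W', Jq u ∈ W' := by
        intro u hu
        obtain ⟨h1, h2, h3⟩ := (hmemW' u).mp hu
        refine (hmemW' _).mpr ⟨hJW u h1, ?_, ?_⟩
        · rw [hC_J_left, h3, map_zero, neg_zero]
        · rw [show hC (Jq u) (Jq w) = (starRingEnd ℂ) (hC u w) from hC_J_J u w, h2, map_zero]
      -- rank decreases
      have hWlt : W' < W := by
        refine lt_of_le_of_ne hW'leW ?_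
        intro heq
        have : w ∈ W' := heq ▸ hwmem
        obtain ⟨_, h2, _⟩ := (hmemW' w).mp this
        rw [hwnorm] at h2
        exact one_ne_zero h2
      have hrank' : Module.finrank ℂ W' ≤ N := by
        have := Submodule.finrank_lt_finrank_of_lt hWlt
        omega
      obtain ⟨m, ξ', μ', hmem', horth', him', heig', hexp'⟩ := ih W' hrank' hTW' hT'W' hJW'
      -- orthogonality of w against the family
      have horthw : ∀ t, qInnerFin (ξ' t) w = 0 := by
        intro t
        obtain ⟨_, h2, h3⟩ := (hmemW' _).mp (hmem' t)
        rw [qInner_decomp, h2, h3, cq_zero, zero_mul, add_zero]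
      have horthw2 : ∀ t, qInnerFin w (ξ' t) = 0 := by
        intro t
        rw [← star_qInner, horthw, star_zero]
      refine ⟨m + 1, Fin.cons w ξ', Fin.cons μ μ', ?_, ?_, ?_, ?_, ?_⟩
      · intro s
        refine Fin.cases ?_ ?_ s
        · simpa using hwmem
        · intro t
          simpa using hW'leW (hmem' t)
      · intro s t
        refine Fin.cases ?_ ?_ s <;> [skip; intro s'] <;> refine Fin.cases ?_ ?_ t
        · simp only [Fin.cons_zero]
          rw [qInner_decomp, hwnorm, hwJw, cq_one, cq_zero, zero_mul, add_zero]
          simp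
        · intro t'
          simp only [Fin.cons_zero, Fin.cons_succ]
          rw [if_neg (by simp [Fin.ext_iff]), horthw2]
        · simp only [Fin.cons_zero, Fin.cons_succ]
          rw [if_neg (by simp [Fin.ext_iff]), horthw]
        · intro t'
          simp only [Fin.cons_succ]
          rw [horth']
          congr 1
          simp [Fin.ext_iff]
      · intro s
        refine Fin.cases ?_ ?_ s
        · simpa using him
        · intro t; simpa using him' t
      · intro s
        refine Fin.cases ?_ ?_ s
        · simpa using hweig
        · intro t; simpa using heig' t
      · intro u hu
        set q : Quaternion ℝ := qInnerFin u w with hq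
        have hqw_mem : q • w ∈ W := by
          rw [qsmul_decomp]
          exact Submodule.add_mem W (Submodule.smul_mem W _ hwmem)
            (Submodule.smul_mem W _ hJwmem)
        have hu' : u - q • w ∈ W' := by
          refine (hmemW' _).mpr ⟨Submodule.sub_mem W hu hqw_mem, ?_, ?_⟩
          · rw [hC_sub_left, hC_qsmul_left, hwnorm, hJww, mul_one, mul_zero, add_zero]
            rw [hC, ← hq]
            ring
          · rw [hC_sub_left, hC_qsmul_left, hwJw, hJwJw, mul_zero, mul_one, zero_add]
            rw [hC_J_right, ← hq]
            ring
        have hexp := hexp' _ hu'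
        have hcoeff : ∀ t, qInnerFin (u - q • w) (ξ' t) = qInnerFin u (ξ' t) := by
          intro t
          rw [qInner_sub_left, qInner_qsmul_left, horthw2, mul_zero, sub_zero]
        have hsum : u - q • w = ∑ t, qInnerFin u (ξ' t) • ξ' t := by
          calc u - q • w = ∑ t, qInnerFin (u - q • w) (ξ' t) • ξ' t := hexp' _ hu'
            _ = ∑ t, qInnerFin u (ξ' t) • ξ' t :=
              Finset.sum_congr rfl fun t _ => by rw [hcoeff]
        rw [Fin.sum_univ_succ]
        simp only [Fin.cons_zero, Fin.cons_succ]
        rw [← hq, ← hsum]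
        abel

lemma qsmul_qsmul (p q : Quaternion ℝ) (u : Fin n → Quaternion ℝ) :
    p • q • u = (p * q) • u := by
  funext k
  exact (mul_assoc p q (u k)).symm

/-- `ℂ_i⁺ = {a + b i : a ∈ ℝ, b ≥ 0}` as a subset of the quaternions. -/
def CiPlus : Set (Quaternion ℝ) :=
  {l | l.imJ = 0 ∧ l.imK = 0 ∧ 0 ≤ l.imI}

lemma forward (hn : 0 < n) (hT : LeftHLinear T) (hT' : LeftHLinear T')
    (hadj : ∀ u v, qInnerFin (T u) v = qInnerFin u (T' v))
    (hcomm : ∀ u, T (T' u) = T' (T u)) :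
    ∃ (ξ : Fin n → (Fin n → Quaternion ℝ)) (lam : Fin n → Quaternion ℝ),
        (∀ k l, qInnerFin (ξ k) (ξ l) = if k = l then 1 else 0) ∧
        (∀ k, lam k ∈ CiPlus) ∧
        (∀ k, T (ξ k) = lam k • ξ k) ∧
        (∀ u, T u = ∑ k, (qInnerFin u (ξ k) * lam k) • ξ k) := by
  obtain ⟨m, ξ, μs, -, horth, him, heig, hexp⟩ :=
    core hT hT' hadj hcomm (2 * n) ⊤
      (by rw [finrank_top]; exact (finrank_V).le)
      (fun u _ => Submodule.mem_top) (fun u _ => Submodule.mem_top)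
      (fun u _ => Submodule.mem_top)
  have hexp' : ∀ u, u = ∑ s, qInnerFin u (ξ s) • ξ s := fun u => hexp u Submodule.mem_top
  -- orthonormality table for the doubled family
  set g : Fin m ⊕ Fin m → (Fin n → Quaternion ℝ) := Sum.elim ξ (fun s => Jq (ξ s)) with hg
  have horthC : ∀ a b, hC (g a) (g b) = if a = b then 1 else 0 := by
    rintro (s | s) (t | t)
    · show hC (ξ s) (ξ t) = _
      rw [hC, horth s t]
      by_cases h : s = t <;> simp [h]
    · show hC (ξ s) (Jq (ξ t)) = _
      rw [hC_J_right, horth s t]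
      by_cases h : s = t <;> simp [h]
    · show hC (Jq (ξ s)) (ξ t) = _
      rw [hC_J_left, hC_J_right, horth s t]
      by_cases h : s = t <;> simp [h]
    · show hC (Jq (ξ s)) (Jq (ξ t)) = _
      rw [hC_J_J, hC, horth s t]
      by_cases h : s = t <;> simp [h, Sum.inr.injEq]
  -- linear independence gives 2m ≤ 2n
  have hindep : LinearIndependent ℂ g := by
    rw [Fintype.linearIndependent_iff]
    intro c hc b
    have := congrArg (hCL (g b)) hc
    rw [map_sum, map_zero] at this
    simp only [map_smul, hCL_apply, smul_eq_mul] at this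
    rw [Finset.sum_congr rfl (fun a _ => by rw [horthC a b])] at this
    simpa [mul_ite] using this
  have hle1 : m + m ≤ 2 * n := by
    have := hindep.fintype_card_le_finrank
    rwa [Fintype.card_sum, Fintype.card_fin, finrank_V] at this
  -- spanning gives 2n ≤ 2m
  have hspan : (⊤ : Submodule ℂ (Fin n → Quaternion ℝ)) ≤ Submodule.span ℂ (Set.range g) := by
    intro u _
    rw [hexp' u]
    apply Submodule.sum_mem
    intro s _
    rw [qsmul_decomp]
    refine Submodule.add_mem _ (Submodule.smul_mem _ _ ?_) (Submodule.smul_mem _ _ ?_)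
    · exact Submodule.subset_span ⟨Sum.inl s, rfl⟩
    · exact Submodule.subset_span ⟨Sum.inr s, rfl⟩
  have hle2 : 2 * n ≤ m + m := by
    haveI := Classical.decEq (Fin n → Quaternion ℝ)
    haveI : Fintype ↑(Set.range g) := Set.fintypeRange g
    have h1 : Submodule.span ℂ (Set.range g) = ⊤ := top_le_iff.mp hspan
    have h2 := finrank_span_le_card (R := ℂ) (Set.range g)
    rw [h1, finrank_top, finrank_V] at h2
    calc 2 * n ≤ (Set.range g).toFinset.card := h2
      _ ≤ Fintype.card (Fin m ⊕ Fin m) := by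
          rw [Set.toFinset_range]
          exact (Finset.card_image_le).trans (by simp)
      _ = m + m := by simp
  have hmn : m = n := by omega
  subst hmn
  refine ⟨ξ, fun k => cq (μs k), horth, ?_, ?_, ?_⟩
  · intro k
    exact ⟨rfl, rfl, him k⟩
  · intro k
    exact heig k
  · intro u
    conv_lhs => rw [hexp' u, LH_sum hT]
    apply Finset.sum_congr rfl
    intro s _
    rw [LH_qsmul hT, heig s]
    exact qsmul_qsmul _ _ _

lemma qInner_sum_left {ι : Type*} (s : Finset ι) (f : ι → (Fin n → Quaternion ℝ))
    (v : Fin n → Quaternion ℝ) :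
    qInnerFin (∑ i ∈ s, f i) v = ∑ i ∈ s, qInnerFin (f i) v := by
  simp only [qInnerFin, Finset.sum_apply, Finset.sum_mul]
  exact Finset.sum_comm

lemma qInner_sum_right {ι : Type*} (s : Finset ι) (f : ι → (Fin n → Quaternion ℝ))
    (v : Fin n → Quaternion ℝ) :
    qInnerFin v (∑ i ∈ s, f i) = ∑ i ∈ s, qInnerFin v (f i) := by
  simp only [qInnerFin, Finset.sum_apply, star_sum, Finset.mul_sum]
  exact Finset.sum_comm

lemma backward {ξ : Fin n → (Fin n → Quaternion ℝ)} {lam : Fin n → Quaternion ℝ}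
    (horth : ∀ k l, qInnerFin (ξ k) (ξ l) = if k = l then 1 else 0)
    (hexpT : ∀ u, T u = ∑ k, (qInnerFin u (ξ k) * lam k) • ξ k) :
    ∃ T'' : (Fin n → Quaternion ℝ) → (Fin n → Quaternion ℝ), LeftHLinear T'' ∧
      (∀ u v, qInnerFin (T u) v = qInnerFin u (T'' v)) ∧ T ∘ T'' = T'' ∘ T := by
  set T'' : (Fin n → Quaternion ℝ) → (Fin n → Quaternion ℝ) :=
    fun v => ∑ k, (qInnerFin v (ξ k) * star (lam k)) • ξ k with hT''
  have key : ∀ (c : Fin n → Quaternion ℝ) (t : Fin n),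
      qInnerFin (∑ k, c k • ξ k) (ξ t) = c t := by
    intro c t
    rw [qInner_sum_left]
    rw [Finset.sum_congr rfl (fun k _ => by rw [qInner_qsmul_left, horth k t])]
    simp [mul_ite]
  refine ⟨T'', ?_, ?_, ?_⟩
  · intro p q u v
    rw [hT'']
    simp only
    rw [Finset.smul_sum, Finset.smul_sum, ← Finset.sum_add_distrib]
    apply Finset.sum_congr rfl
    intro k _
    rw [qInner_add_left, qInner_qsmul_left, qInner_qsmul_left, qsmul_qsmul, qsmul_qsmul]
    rw [add_mul, mul_assoc, mul_assoc, add_smul]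
  · intro u v
    rw [hexpT u, hT'']
    simp only
    rw [qInner_sum_left, qInner_sum_right]
    apply Finset.sum_congr rfl
    intro k _
    rw [qInner_qsmul_left, qInner_qsmul_right, star_mul, star_star, star_qInner v (ξ k),
      mul_assoc]
  · funext v
    show T (T'' v) = T'' (T v)
    rw [hexpT (T'' v), hT'']
    simp only
    have h1 : ∀ t, qInnerFin (T'' v) (ξ t) = qInnerFin v (ξ t) * star (lam t) := by
      intro t
      rw [hT'']
      simp only
      exact key _ t
    have h2 : ∀ t, qInnerFin (T v) (ξ t) = qInnerFin v (ξ t) * lam t := by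
      intro t
      rw [hexpT v]
      exact key _ t
    apply Finset.sum_congr rfl
    intro t _
    rw [h1 t, h2 t, mul_assoc, mul_assoc, star_comm_self']

end Core

/-- A left ℍ-linear map `T` on `Hₙ = (Fin n → ℍ)` is normal (it admits a left ℍ-linear
adjoint commuting with it) iff it is diagonalized by an orthonormal family `ξ₁, …, ξₙ`
with eigenvalues `λ₁, …, λₙ ∈ ℂ_i⁺`, in which case
`T u = Σ_k (⟪u, ξ_k⟫ · λ_k) • ξ_k` for every `u`. -/
theorem normal_iff_diagonalizable {n : ℕ} (hn : 0 < n)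
    (T : (Fin n → Quaternion ℝ) → (Fin n → Quaternion ℝ)) (hT : LeftHLinear T) :
    (∃ T' : (Fin n → Quaternion ℝ) → (Fin n → Quaternion ℝ), LeftHLinear T' ∧
        (∀ u v, qInnerFin (T u) v = qInnerFin u (T' v)) ∧ T ∘ T' = T' ∘ T) ↔
    (∃ (ξ : Fin n → (Fin n → Quaternion ℝ)) (lam : Fin n → Quaternion ℝ),
        (∀ k l, qInnerFin (ξ k) (ξ l) = if k = l then 1 else 0) ∧
        (∀ k, lam k ∈ CiPlus) ∧
        (∀ k, T (ξ k) = lam k • ξ k) ∧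
        (∀ u, T u = ∑ k, (qInnerFin u (ξ k) * lam k) • ξ k)) := by
  constructor
  · rintro ⟨T', hT', hadj, hcomm⟩
    exact forward hn hT hT' hadj (fun u => congrFun hcomm u)
  · rintro ⟨ξ, lam, horth, hCi, heig, hexpT⟩
    exact backward horth hexpT
end

section
/- Let T : H → H be a nonzero compact, bounded, left ℍ-linear, self-adjoint map on H = L²(μ, ℍ). Then there exist λ ∈ ℝ and u ∈ H with u ≠ 0 such that T u = λ • u and |λ| = ‖T‖, where ‖T‖ = sup{‖T v‖ : ‖v‖ ≤ 1}. If moreover T is positive, i.e. ⟪T v, v⟫ ≥ 0 for every v ∈ H, then there exists u ≠ 0 with T u = ‖T‖ • u. -/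
set_option synthInstance.maxHeartbeats 1000000
set_option maxHeartbeats 1000000


open MeasureTheory

/-- The quaternion-valued inner product on `H = L²(μ, ℍ)`:
`⟪u, v⟫ = ∫ u(x) · conj(v(x)) dμ(x)`. -/
noncomputable def qInnerL2 {X : Type*} [MeasurableSpace X] (μ : Measure X)
    (u v : Lp (Quaternion ℝ) 2 μ) : Quaternion ℝ :=
  ∫ x, u x * star (v x) ∂μ

/-- A map `T : L²(μ, ℍ) → L²(μ, ℍ)` is left ℍ-linear. -/
def LeftHLinearL2 {X : Type*} [MeasurableSpace X] {μ : Measure X}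
    (T : Lp (Quaternion ℝ) 2 μ → Lp (Quaternion ℝ) 2 μ) : Prop :=
  ∀ (p q : Quaternion ℝ) (u v : Lp (Quaternion ℝ) 2 μ),
    T (p • u + q • v) = p • T u + q • T v

/-- A map `T : L²(μ, ℍ) → L²(μ, ℍ)` is bounded. -/
def BoundedOpL2 {X : Type*} [MeasurableSpace X] {μ : Measure X}
    (T : Lp (Quaternion ℝ) 2 μ → Lp (Quaternion ℝ) 2 μ) : Prop :=
  ∃ c : ℝ, 0 ≤ c ∧ ∀ u, ‖T u‖ ≤ c * ‖u‖


/-- A map `T : L²(μ, ℍ) → L²(μ, ℍ)` is compact: it maps bounded sets to relatively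
compact sets. -/
def CompactOpL2 {X : Type*} [MeasurableSpace X] {μ : Measure X}
    (T : Lp (Quaternion ℝ) 2 μ → Lp (Quaternion ℝ) 2 μ) : Prop :=
  ∀ B : Set (Lp (Quaternion ℝ) 2 μ), Bornology.IsBounded B → IsCompact (closure (T '' B))

section Auxiliary

open Filter Topology
open scoped Quaternion RealInnerProductSpace

/-- Auxiliary: an approximate-eigenvector sequence for a "sequentially compact" operator
yields an eigenvector. -/
private lemma qeig_key {E : Type*} [NormedAddCommGroup E] [InnerProductSpace ℝ E]
    (T : E →L[ℝ] E)
    (hcomp : ∀ z : ℕ → E, (∀ k, ‖z k‖ ≤ 1) → ∃ (w : E) (φ : ℕ → ℕ), StrictMono φ ∧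
      Tendsto (fun k => T (z (φ k))) atTop (𝓝 w))
    {c : ℝ} (hc : c ≠ 0) (z : ℕ → E) (hz : ∀ k, ‖z k‖ ≤ 1)
    (h1 : Tendsto (fun k => T (z k) - c • z k) atTop (𝓝 0))
    (h2 : ∀ᶠ k in atTop, |c| / 2 ≤ ‖T (z k)‖) :
    ∃ u : E, u ≠ 0 ∧ T u = c • u := by
  obtain ⟨w, φ, hφ, hw⟩ := hcomp z hz
  have h1' : Tendsto (fun k => T (z (φ k)) - c • z (φ k)) atTop (𝓝 0) :=
    h1.comp hφ.tendsto_atTop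
  have hcz : Tendsto (fun k => c • z (φ k)) atTop (𝓝 w) := by
    have := hw.sub h1'
    simpa using this
  have hzt : Tendsto (fun k => z (φ k)) atTop (𝓝 (c⁻¹ • w)) := by
    have := hcz.const_smul c⁻¹
    simpa [smul_smul, inv_mul_cancel₀ hc] using this
  have hTz : Tendsto (fun k => T (z (φ k))) atTop (𝓝 (T (c⁻¹ • w))) :=
    (T.continuous.tendsto _).comp hzt
  have hTw : T (c⁻¹ • w) = w := tendsto_nhds_unique hTz hw
  have hwn : |c| / 2 ≤ ‖w‖ :=
    ge_of_tendsto hw.norm (hφ.tendsto_atTop.eventually h2)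
  have hw0 : w ≠ 0 := by
    intro h
    rw [h, norm_zero] at hwn
    have : 0 < |c| := abs_pos.mpr hc
    linarith
  refine ⟨c⁻¹ • w, smul_ne_zero (inv_ne_zero hc) hw0, ?_⟩
  rw [hTw, smul_smul, mul_inv_cancel₀ hc, one_smul]

/-- Auxiliary: a nonzero self-adjoint "sequentially compact" operator on a real inner
product space has an eigenvalue of absolute value equal to the operator norm. -/
private lemma qeig_main {E : Type*} [NormedAddCommGroup E] [InnerProductSpace ℝ E]
    (T : E →L[ℝ] E)
    (hsa : ∀ u v : E, ⟪T u, v⟫ = ⟪u, T v⟫)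
    (hcomp : ∀ z : ℕ → E, (∀ k, ‖z k‖ ≤ 1) → ∃ (w : E) (φ : ℕ → ℕ), StrictMono φ ∧
      Tendsto (fun k => T (z (φ k))) atTop (𝓝 w))
    (hT0 : T ≠ 0) :
    ∃ (lam : ℝ) (u : E), u ≠ 0 ∧ T u = lam • u ∧ |lam| = ‖T‖ := by
  set M : ℝ := ‖T‖ with hM
  have hMpos : 0 < M := norm_pos_iff.mpr hT0
  have hex : ∀ n : ℕ, ∃ u : E, ‖u‖ ≤ 1 ∧ M - 1 / (n + 1) ≤ ‖T u‖ := by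
    intro n
    by_contra hcon
    push_neg at hcon
    have hpos : (0:ℝ) < 1 / (n + 1) := by positivity
    have hc0 : 0 ≤ M - 1 / (n + 1) := by
      by_contra hneg
      push_neg at hneg
      have := hcon 0 (by simp)
      rw [map_zero, norm_zero] at this
      linarith
    have hbd : ‖T‖ ≤ M - 1 / (n + 1) := by
      refine T.opNorm_le_bound hc0 (fun x => ?_)
      rcases eq_or_ne x 0 with hx | hx
      · simp [hx]
      · have hxpos : 0 < ‖x‖ := norm_pos_iff.mpr hx
        have hx1 : ‖‖x‖⁻¹ • x‖ ≤ 1 := by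
          rw [norm_smul, Real.norm_eq_abs, abs_of_nonneg (inv_nonneg.mpr (norm_nonneg x)),
            inv_mul_cancel₀ hxpos.ne']
        have h := hcon _ hx1
        rw [_root_.map_smul, norm_smul, Real.norm_eq_abs,
          abs_of_nonneg (inv_nonneg.mpr (norm_nonneg x))] at h
        have := (mul_lt_mul_of_pos_left h hxpos)
        rw [← mul_assoc, mul_inv_cancel₀ hxpos.ne', one_mul] at this
        nlinarith
    linarith
  choose u hu1 hu2 using hex
  have hTun : Tendsto (fun n => ‖T (u n)‖) atTop (𝓝 M) := by
    have hlo : Tendsto (fun n : ℕ => M - 1 / (n + 1)) atTop (𝓝 M) := by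
      have := tendsto_one_div_add_atTop_nhds_zero_nat (𝕜 := ℝ)
      simpa using (tendsto_const_nhds (x := M)).sub this
    refine tendsto_of_tendsto_of_tendsto_of_le_of_le hlo tendsto_const_nhds
      (fun n => hu2 n) (fun n => ?_)
    calc ‖T (u n)‖ ≤ M * ‖u n‖ := T.le_opNorm _
    _ ≤ M * 1 := by nlinarith [hu1 n, norm_nonneg (u n)]
    _ = M := mul_one M
  set ε : ℕ → E := fun n => T (T (u n)) - (M ^ 2) • u n with hε
  have hεsq : ∀ n, ‖ε n‖ ^ 2 ≤ M ^ 4 - M ^ 2 * ‖T (u n)‖ ^ 2 := by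
    intro n
    have hexp := norm_sub_sq_real (T (T (u n))) ((M ^ 2) • u n)
    have hinner : ⟪T (T (u n)), (M ^ 2) • u n⟫ = M ^ 2 * ‖T (u n)‖ ^ 2 := by
      rw [real_inner_smul_right, hsa, real_inner_self_eq_norm_sq]
    have h1 : ‖T (T (u n))‖ ≤ M * ‖T (u n)‖ := T.le_opNorm _
    have h2 : ‖T (u n)‖ ≤ M := by
      calc ‖T (u n)‖ ≤ M * ‖u n‖ := T.le_opNorm _
      _ ≤ M := by nlinarith [hu1 n, norm_nonneg (u n)]
    have h3 : ‖(M ^ 2) • u n‖ = M ^ 2 * ‖u n‖ := by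
      rw [norm_smul, Real.norm_eq_abs, abs_of_nonneg (by positivity)]
    have h4 : ‖u n‖ ≤ 1 := hu1 n
    have hTT2 : ‖T (T (u n))‖ ^ 2 ≤ M ^ 2 * ‖T (u n)‖ ^ 2 := by
      nlinarith [norm_nonneg (T (T (u n))), norm_nonneg (T (u n)), hMpos.le]
    have hM4 : (M ^ 2 * ‖u n‖) ^ 2 ≤ M ^ 4 := by
      have hu' : ‖u n‖ ^ 2 ≤ 1 := by nlinarith [norm_nonneg (u n)]
      nlinarith [sq_nonneg (M ^ 2), hu']
    show ‖T (T (u n)) - (M ^ 2) • u n‖ ^ 2 ≤ M ^ 4 - M ^ 2 * ‖T (u n)‖ ^ 2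
    rw [hexp, hinner, h3]
    linarith
  have hε0 : Tendsto ε atTop (𝓝 0) := by
    have hsq : Tendsto (fun n => ‖ε n‖ ^ 2) atTop (𝓝 0) := by
      have hub : Tendsto (fun n => M ^ 4 - M ^ 2 * ‖T (u n)‖ ^ 2) atTop (𝓝 0) := by
        have := ((hTun.pow 2).const_mul (M ^ 2))
        have h := (tendsto_const_nhds (x := M ^ 4)).sub this
        simpa [pow_succ, pow_zero, mul_comm, mul_assoc, mul_left_comm] using h
      exact squeeze_zero (fun n => by positivity) hεsq hub
    have : Tendsto (fun n => ‖ε n‖) atTop (𝓝 0) := by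
      have := hsq.sqrt
      simpa [Real.sqrt_sq (norm_nonneg _)] using this
    exact tendsto_zero_iff_norm_tendsto_zero.mpr this
  set v : ℕ → E := fun n => T (u n) + M • u n with hv
  have hveq : ∀ n, T (v n) - M • v n = ε n := by
    intro n
    simp only [hv, hε, map_add, _root_.map_smul, smul_add, smul_smul]
    rw [pow_two]
    abel
  by_cases hA : ∃ δ > 0, ∃ᶠ n in atTop, δ ≤ ‖v n‖
  · obtain ⟨δ, hδ, hfreq⟩ := hA
    obtain ⟨φ, hφmono, hφ⟩ := Filter.extraction_of_frequently_atTop hfreq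
    set z : ℕ → E := fun k => ‖v (φ k)‖⁻¹ • v (φ k) with hzdef
    have hvφpos : ∀ k, 0 < ‖v (φ k)‖ := fun k => lt_of_lt_of_le hδ (hφ k)
    have hz1 : ∀ k, ‖z k‖ = 1 := fun k => by
      rw [hzdef]
      simp [norm_smul, abs_of_nonneg (inv_nonneg.mpr (norm_nonneg _)),
        inv_mul_cancel₀ (hvφpos k).ne']
    have hz : ∀ k, ‖z k‖ ≤ 1 := fun k => le_of_eq (hz1 k)
    have hzm : ∀ k, T (z k) - M • z k = ‖v (φ k)‖⁻¹ • ε (φ k) := by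
      intro k
      simp only [hzdef, _root_.map_smul, smul_comm M, ← smul_sub, hveq]
    have h1 : Tendsto (fun k => T (z k) - M • z k) atTop (𝓝 0) := by
      rw [tendsto_zero_iff_norm_tendsto_zero]
      have hεφ : Tendsto (fun k => ‖ε (φ k)‖) atTop (𝓝 0) :=
        (tendsto_zero_iff_norm_tendsto_zero.mp hε0).comp hφmono.tendsto_atTop
      refine squeeze_zero (fun k => norm_nonneg _) (fun k => ?_)
        (by simpa using hεφ.const_mul δ⁻¹)
      rw [hzm k, norm_smul, Real.norm_eq_abs, abs_of_nonneg (inv_nonneg.mpr (norm_nonneg _))]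
      gcongr
      exact hφ k
    have h2 : ∀ᶠ k in atTop, |M| / 2 ≤ ‖T (z k)‖ := by
      have hev : ∀ᶠ k in atTop, ‖T (z k) - M • z k‖ ≤ M / 2 := by
        have := (tendsto_zero_iff_norm_tendsto_zero.mp h1)
        exact this.eventually_le_const (by linarith)
      filter_upwards [hev] with k hk
      have hlow : ‖M • z k‖ - ‖T (z k) - M • z k‖ ≤ ‖T (z k)‖ := by
        simpa [norm_sub_rev] using norm_sub_norm_le (M • z k) (M • z k - T (z k))
      rw [norm_smul, Real.norm_eq_abs, hz1 k, mul_one, abs_of_pos hMpos] at hlow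
      rw [abs_of_pos hMpos]
      linarith
    obtain ⟨w, hw0, hwT⟩ := qeig_key T hcomp hMpos.ne' z hz h1 h2
    exact ⟨M, w, hw0, hwT, abs_of_pos hMpos⟩
  · push_neg at hA
    have hv0 : Tendsto v atTop (𝓝 0) := by
      rw [NormedAddCommGroup.tendsto_nhds_zero]
      intro δ hδ
      have := hA δ hδ
      simpa using this
    have h1 : Tendsto (fun n => T (u n) - (-M) • u n) atTop (𝓝 0) := by
      simpa [hv, sub_neg_eq_add, neg_smul] using hv0
    have h2 : ∀ᶠ n in atTop, |(-M)| / 2 ≤ ‖T (u n)‖ := by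
      have : |(-M)| / 2 < M := by rw [abs_neg, abs_of_pos hMpos]; linarith
      exact hTun.eventually (eventually_ge_nhds this)
    obtain ⟨w, hw0, hwT⟩ := qeig_key T hcomp (neg_ne_zero.mpr hMpos.ne') u hu1 h1 h2
    exact ⟨-M, w, hw0, hwT, by rw [abs_neg, abs_of_pos hMpos]⟩

/-- Star on the quaternions as a continuous `ℝ`-linear map. -/
private noncomputable def qeigStarCLM : ℍ[ℝ] →L[ℝ] ℍ[ℝ] :=
  LinearMap.mkContinuous
    { toFun := star
      map_add' := star_add
      map_smul' := fun r q => Quaternion.star_smul r q } 1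
    (fun q => by simp)

@[simp] private lemma qeigStarCLM_apply (q : ℍ[ℝ]) : qeigStarCLM q = star q := rfl

/-- Real part of a quaternion as a continuous `ℝ`-linear map. -/
private noncomputable def qeigReCLM : ℍ[ℝ] →L[ℝ] ℝ :=
  LinearMap.mkContinuous (QuaternionAlgebra.reₗ _ _ _ : ℍ[ℝ] →ₗ[ℝ] ℝ) 1
    (fun q => by
      have h : |q.re| ≤ ‖q‖ := by
        have h := abs_real_inner_le_norm q (1 : ℍ[ℝ])
        simpa [Quaternion.inner_def] using h
      rw [one_mul]; exact h)

@[simp] private lemma qeigReCLM_apply (q : ℍ[ℝ]) : qeigReCLM q = q.re := rfl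

private lemma qeig_integrable_mul_star {X : Type*} [MeasurableSpace X] (μ : Measure X)
    (u v : Lp (Quaternion ℝ) 2 μ) :
    Integrable (fun x => u x * star (v x)) μ := by
  have h2 := qeigStarCLM.comp_memLp' (Lp.memLp v)
  simp only [Function.comp_def, qeigStarCLM_apply] at h2
  have h1 : MemLp (fun x => (u : X → ℍ[ℝ]) x) 2 μ := Lp.memLp u
  have h3 := h2.smul (φ := fun x => (u : X → ℍ[ℝ]) x) h1
    (p := 2) (q := 2) (r := 1)
  rw [memLp_one_iff_integrable] at h3
  exact h3

/-- The real part of the quaternionic inner product is the real `L²` inner product. -/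
private lemma qeig_qInner_re {X : Type*} [MeasurableSpace X] (μ : Measure X)
    (u v : Lp (Quaternion ℝ) 2 μ) :
    (qInnerL2 μ u v).re = ⟪u, v⟫ := by
  have h := qeigReCLM.integral_comp_comm (qeig_integrable_mul_star μ u v)
  rw [MeasureTheory.L2.inner_def]
  calc (qInnerL2 μ u v).re = qeigReCLM (∫ x, u x * star (v x) ∂μ) := rfl
    _ = ∫ x, qeigReCLM (u x * star (v x)) ∂μ := h.symm
    _ = ∫ x, ⟪u x, v x⟫ ∂μ :=
        integral_congr_ae (Filter.Eventually.of_forall fun x => by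
          simp only [qeigReCLM_apply, Quaternion.inner_def])

end Auxiliary

/-- A nonzero compact bounded left ℍ-linear self-adjoint operator `T` on `L²(μ, ℍ)`
has a real eigenvalue of absolute value `‖T‖`; if moreover `T` is positive, then `‖T‖`
itself is an eigenvalue. -/
theorem exists_eigenvalue_norm_op {X : Type*} [MeasurableSpace X] (μ : Measure X)
    (T : Lp (Quaternion ℝ) 2 μ → Lp (Quaternion ℝ) 2 μ)
    (hT : LeftHLinearL2 T) (hTb : BoundedOpL2 T) (hTc : CompactOpL2 T)
    (hsa : ∀ u v, qInnerL2 μ (T u) v = qInnerL2 μ u (T v))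
    (hT0 : T ≠ 0) :
    (∃ (lam : ℝ) (u : Lp (Quaternion ℝ) 2 μ), u ≠ 0 ∧
        T u = ((lam : Quaternion ℝ)) • u ∧
        |lam| = sSup {r : ℝ | ∃ v : Lp (Quaternion ℝ) 2 μ, ‖v‖ ≤ 1 ∧ r = ‖T v‖}) ∧
    ((∀ v, (qInnerL2 μ (T v) v).im = 0 ∧ 0 ≤ (qInnerL2 μ (T v) v).re) →
      ∃ u : Lp (Quaternion ℝ) 2 μ, u ≠ 0 ∧
        T u = ((sSup {r : ℝ | ∃ v : Lp (Quaternion ℝ) 2 μ, ‖v‖ ≤ 1 ∧ r = ‖T v‖} :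
          ℝ) : Quaternion ℝ) • u) := by
  classical
  open Filter Topology RealInnerProductSpace in
  -- real linearity
  have hadd : ∀ u v, T (u + v) = T u + T v := fun u v => by
    have := hT 1 1 u v; simpa using this
  have hsmulH : ∀ (p : Quaternion ℝ) u, T (p • u) = p • T u := fun p u => by
    have := hT p 0 u 0; simpa using this
  have hcoe : ∀ (r : ℝ) (u : Lp (Quaternion ℝ) 2 μ),
      ((r : Quaternion ℝ)) • u = r • u := fun r u => by
    rw [show ((r : Quaternion ℝ)) = algebraMap ℝ (Quaternion ℝ) r from rfl,
      algebraMap_smul]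
  have hsmulR : ∀ (r : ℝ) (u : Lp (Quaternion ℝ) 2 μ), T (r • u) = r • T u := fun r u => by
    rw [← hcoe r u, hsmulH, hcoe]
  obtain ⟨c, hc0, hcb⟩ := hTb
  set Tc : Lp (Quaternion ℝ) 2 μ →L[ℝ] Lp (Quaternion ℝ) 2 μ :=
    LinearMap.mkContinuousOfExistsBound
      { toFun := T, map_add' := hadd, map_smul' := hsmulR } ⟨c, hcb⟩ with hTcdef
  have hTcapp : ∀ u, Tc u = T u := fun u => rfl
  -- self-adjointness for the real structure
  have hsaR : ∀ u v, ⟪Tc u, v⟫ = ⟪u, Tc v⟫ := fun u v => by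
    rw [hTcapp, hTcapp, ← qeig_qInner_re, ← qeig_qInner_re, hsa]
  -- sequential compactness
  have hcomp : ∀ z : ℕ → Lp (Quaternion ℝ) 2 μ, (∀ k, ‖z k‖ ≤ 1) →
      ∃ (w : Lp (Quaternion ℝ) 2 μ) (φ : ℕ → ℕ), StrictMono φ ∧
        Tendsto (fun k => Tc (z (φ k))) atTop (𝓝 w) := by
    intro z hz
    have hB : Bornology.IsBounded (Set.range z) :=
      (Metric.isBounded_closedBall (x := (0 : Lp (Quaternion ℝ) 2 μ)) (r := 1)).subset
        (by rintro _ ⟨k, rfl⟩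
            simpa [Metric.mem_closedBall, dist_zero_right] using hz k)
    have hK := hTc _ hB
    have hmem : ∀ k, T (z k) ∈ closure (T '' Set.range z) := fun k =>
      subset_closure ⟨z k, ⟨k, rfl⟩, rfl⟩
    obtain ⟨w, -, φ, hφ, hconv⟩ := hK.tendsto_subseq hmem
    exact ⟨w, φ, hφ, by simpa [Function.comp_def, hTcapp] using hconv⟩
  -- the operator is nonzero
  have hTc0 : Tc ≠ 0 := by
    intro h
    apply hT0
    funext w
    have hw : Tc w = 0 := by rw [h]; rfl
    rw [hTcapp] at hw
    simpa using hw
  obtain ⟨lam, u, hu0, hTu, hlam⟩ := qeig_main Tc hsaR hcomp hTc0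
  -- the sup in the statement is the operator norm
  have hS : {r : ℝ | ∃ v : Lp (Quaternion ℝ) 2 μ, ‖v‖ ≤ 1 ∧ r = ‖T v‖}
      = (fun x => ‖Tc x‖) '' Metric.closedBall 0 1 := by
    ext r
    constructor
    · rintro ⟨v, hv, rfl⟩
      exact ⟨v, by simpa [Metric.mem_closedBall, dist_zero_right] using hv, rfl⟩
    · rintro ⟨v, hv, rfl⟩
      exact ⟨v, by simpa [Metric.mem_closedBall, dist_zero_right] using hv, rfl⟩
  have hSup : sSup {r : ℝ | ∃ v : Lp (Quaternion ℝ) 2 μ, ‖v‖ ≤ 1 ∧ r = ‖T v‖} = ‖Tc‖ := by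
    rw [hS]
    exact Tc.sSup_unitClosedBall_eq_norm
  have heig : T u = ((lam : Quaternion ℝ)) • u := by
    rw [← hTcapp, hTu, hcoe]
  refine ⟨⟨lam, u, hu0, heig, hSup ▸ hlam⟩, ?_⟩
  intro hpos
  -- positivity forces the eigenvalue to be nonnegative
  have hre : (qInnerL2 μ (T u) u).re = lam * ‖u‖ ^ 2 := by
    rw [qeig_qInner_re, ← hTcapp, hTu, real_inner_smul_left, real_inner_self_eq_norm_sq]
  have hpos' := (hpos u).2
  rw [hre] at hpos'
  have hu2 : 0 < ‖u‖ ^ 2 := by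
    have : 0 < ‖u‖ := norm_pos_iff.mpr hu0
    positivity
  have hlam0 : 0 ≤ lam := by nlinarith [hpos', hu2]
  have hlameq : lam = sSup {r : ℝ | ∃ v : Lp (Quaternion ℝ) 2 μ, ‖v‖ ≤ 1 ∧ r = ‖T v‖} := by
    rw [hSup, ← hlam, abs_of_nonneg hlam0]
  exact ⟨u, hu0, by rw [← hlameq]; exact heig⟩
end

section
/- Let τ > 0 and let F ∈ L²([-τ, τ]², ℍ). If ∫_{[-τ,τ]²} F(ω₁, ω₂)·exp(j·π n₂ ω₂/τ)·exp(i·π n₁ ω₁/τ) dω₁ dω₂ = 0 for every (n₁, n₂) ∈ ℤ², then F = 0 almost everywhere on [-τ, τ]². -/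
open MeasureTheory Real


def qi : Quaternion ℝ := ⟨0, 1, 0, 0⟩
def qj : Quaternion ℝ := ⟨0, 0, 1, 0⟩

lemma norm_qi : ‖qi‖ = 1 := by
  have h : Quaternion.normSq qi = 1 := by rw [Quaternion.normSq_def']; simp [qi]
  have := Quaternion.normSq_eq_norm_mul_self qi
  nlinarith [norm_nonneg qi]

lemma norm_qj : ‖qj‖ = 1 := by
  have h : Quaternion.normSq qj = 1 := by rw [Quaternion.normSq_def']; simp [qj]
  have := Quaternion.normSq_eq_norm_mul_self qj
  nlinarith [norm_nonneg qj]

lemma q_exp_smul (q : Quaternion ℝ) (hq : q.re = 0) (hnorm : ‖q‖ = 1) (θ : ℝ) :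
    NormedSpace.exp (θ • q) = (Real.cos θ : Quaternion ℝ) + Real.sin θ • q := by
  rcases eq_or_ne θ 0 with h | h
  · simp [h, NormedSpace.exp_zero]
  · have hre : (θ • q).re = 0 := by simp [hq]
    rw [Quaternion.exp_of_re_eq_zero _ hre]
    have hn : ‖θ • q‖ = |θ| := by rw [norm_smul, hnorm, mul_one, Real.norm_eq_abs]
    rw [hn]
    have h1 : Real.cos |θ| = Real.cos θ := by
      rcases abs_choice θ with h' | h' <;> rw [h'] <;> simp [Real.cos_neg]
    have h2 : Real.sin |θ| / |θ| = Real.sin θ / θ := by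
      rcases abs_choice θ with h' | h' <;> rw [h']
      rw [Real.sin_neg, neg_div_neg_eq]
    rw [h1, h2, smul_smul, div_mul_cancel₀ _ h]

lemma q_exp_i (θ : ℝ) : NormedSpace.exp (θ • qi) =
    (Real.cos θ : Quaternion ℝ) + Real.sin θ • qi := q_exp_smul qi rfl norm_qi θ

lemma q_exp_j (θ : ℝ) : NormedSpace.exp (θ • qj) =
    (Real.cos θ : Quaternion ℝ) + Real.sin θ • qj := q_exp_smul qj rfl norm_qj θ

noncomputable def Pq (a b : ℝ) : Quaternion ℝ :=
  ((Real.cos a : Quaternion ℝ) + Real.sin a • qj) * ((Real.cos b : Quaternion ℝ) + Real.sin b • qi)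

lemma norm_Pq_le (a b : ℝ) : ‖Pq a b‖ ≤ 4 := by
  rw [Pq, norm_mul]
  have h1 : ∀ (x : ℝ) (q : Quaternion ℝ), ‖q‖ = 1 →
      ‖(Real.cos x : Quaternion ℝ) + Real.sin x • q‖ ≤ 2 := by
    intro x q hq
    refine (norm_add_le _ _).trans ?_
    rw [Quaternion.norm_coe, norm_smul, hq, mul_one, Real.norm_eq_abs, Real.norm_eq_abs]
    have := Real.abs_cos_le_one x
    have := Real.abs_sin_le_one x
    linarith
  have := h1 a qj norm_qj
  have := h1 b qi norm_qi
  nlinarith [norm_nonneg (((Real.cos a : Quaternion ℝ) + Real.sin a • qj)),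
    norm_nonneg (((Real.cos b : Quaternion ℝ) + Real.sin b • qi))]

lemma Pq_cc (q : Quaternion ℝ) (a b : ℝ) :
    q * Pq a b + q * Pq a (-b) + q * Pq (-a) b + q * Pq (-a) (-b) =
      (4 * (Real.cos a * Real.cos b)) • q := by
  have hsum : Pq a b + Pq a (-b) + Pq (-a) b + Pq (-a) (-b) =
      ((4 * (Real.cos a * Real.cos b) : ℝ) : Quaternion ℝ) := by
    simp only [Pq, Real.cos_neg, Real.sin_neg]
    ext <;> simp [Quaternion.coe_mul_eq_smul] <;> simp [qi, qj] <;> ring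
  rw [← mul_add, ← mul_add, ← mul_add, hsum, Quaternion.mul_coe_eq_smul]


noncomputable def mulRightCLM (c : Quaternion ℝ) : Quaternion ℝ →L[ℝ] Quaternion ℝ :=
  (ContinuousLinearMap.mul ℝ (Quaternion ℝ)).flip c

example (c q : Quaternion ℝ) : mulRightCLM c q = q * c := rfl

noncomputable def reCLM : Quaternion ℝ →L[ℝ] ℝ :=
  ⟨⟨⟨QuaternionAlgebra.re, fun _ _ => rfl⟩, fun _ _ => rfl⟩, Quaternion.continuous_re⟩
noncomputable def imICLM : Quaternion ℝ →L[ℝ] ℝ :=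
  ⟨⟨⟨QuaternionAlgebra.imI, fun _ _ => rfl⟩, fun _ _ => rfl⟩, Quaternion.continuous_imI⟩
noncomputable def imJCLM : Quaternion ℝ →L[ℝ] ℝ :=
  ⟨⟨⟨QuaternionAlgebra.imJ, fun _ _ => rfl⟩, fun _ _ => rfl⟩, Quaternion.continuous_imJ⟩
noncomputable def imKCLM : Quaternion ℝ →L[ℝ] ℝ :=
  ⟨⟨⟨QuaternionAlgebra.imK, fun _ _ => rfl⟩, fun _ _ => rfl⟩, Quaternion.continuous_imK⟩

lemma Pq_cs (q : Quaternion ℝ) (a b : ℝ) :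
    q * Pq a b - q * Pq a (-b) + q * Pq (-a) b - q * Pq (-a) (-b) =
      ((4 * (Real.cos a * Real.sin b)) • q) * qi := by
  have hsum : Pq a b - Pq a (-b) + Pq (-a) b - Pq (-a) (-b) =
      ((4 * (Real.cos a * Real.sin b) : ℝ) : Quaternion ℝ) * qi := by
    simp only [Pq, Real.cos_neg, Real.sin_neg]
    ext <;> simp <;> simp [qi, qj] <;> ring
  rw [← mul_sub, ← mul_add, ← mul_sub, hsum, ← mul_assoc, Quaternion.mul_coe_eq_smul]

lemma Pq_sc (q : Quaternion ℝ) (a b : ℝ) :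
    q * Pq a b + q * Pq a (-b) - q * Pq (-a) b - q * Pq (-a) (-b) =
      ((4 * (Real.sin a * Real.cos b)) • q) * qj := by
  have hsum : Pq a b + Pq a (-b) - Pq (-a) b - Pq (-a) (-b) =
      ((4 * (Real.sin a * Real.cos b) : ℝ) : Quaternion ℝ) * qj := by
    simp only [Pq, Real.cos_neg, Real.sin_neg]
    ext <;> simp <;> simp [qi, qj] <;> ring
  rw [← mul_add, ← mul_sub, ← mul_sub, hsum, ← mul_assoc, Quaternion.mul_coe_eq_smul]

lemma Pq_ss (q : Quaternion ℝ) (a b : ℝ) :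
    q * Pq a b - q * Pq a (-b) - q * Pq (-a) b + q * Pq (-a) (-b) =
      ((4 * (Real.sin a * Real.sin b)) • q) * (qj * qi) := by
  have hsum : Pq a b - Pq a (-b) - Pq (-a) b + Pq (-a) (-b) =
      ((4 * (Real.sin a * Real.sin b) : ℝ) : Quaternion ℝ) * (qj * qi) := by
    simp only [Pq, Real.cos_neg, Real.sin_neg]
    ext <;> simp <;> simp [qi, qj] <;> ring
  rw [← mul_sub, ← mul_sub, ← mul_add, hsum, ← mul_assoc, Quaternion.mul_coe_eq_smul]

lemma qi_ne_zero : qi ≠ 0 := by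
  intro h
  have := congrArg QuaternionAlgebra.imI h
  simp [qi, Quaternion.imI_zero] at this

lemma qj_ne_zero : qj ≠ 0 := by
  intro h
  have := congrArg QuaternionAlgebra.imJ h
  simp [qj, Quaternion.imJ_zero] at this

lemma qjqi_ne_zero : qj * qi ≠ 0 := mul_ne_zero qj_ne_zero qi_ne_zero

lemma fourier_norm_one {T : ℝ} [Fact (0 < T)] (n : ℤ) (x : AddCircle T) :
    ‖fourier n x‖ = 1 := by
  rw [fourier_apply]; exact Circle.norm_coe _


lemma one_dim (T a : ℝ) [hT : Fact (0 < T)] (v : ℝ → ℂ)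
    (hv : MemLp v 2 (volume.restrict (Set.Ioc a (a+T))))
    (h : ∀ n : ℤ, ∫ x in Set.Ioc a (a+T), v x * fourier n (x : AddCircle T) = 0) :
    ∀ᵐ x ∂(volume.restrict (Set.Ioc a (a+T))), v x = 0 := by
  set μ := volume.restrict (Set.Ioc a (a+T)) with hμ
  set v' := hv.1.mk v with hv'def
  have hv'sm : StronglyMeasurable v' := hv.1.stronglyMeasurable_mk
  have hvv' : v =ᵐ[μ] v' := hv.1.ae_eq_mk
  set w : AddCircle T → ℂ := AddCircle.liftIoc T a v' with hwdef
  have hw_comp : ∀ x ∈ Set.Ioc a (a+T), w ↑x = v' x := fun x hx =>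
    AddCircle.liftIoc_coe_apply hx
  have hmp := AddCircle.measurePreserving_mk T a
  have hw_sm : StronglyMeasurable w := by
    have h1 : Measurable fun x : AddCircle T =>
        ((AddCircle.equivIoc T a x : Set.Ioc a (a+T)) : ℝ) :=
      measurable_subtype_coe.comp (AddCircle.measurableEquivIoc T a).measurable
    exact hv'sm.comp_measurable h1
  have hwmk : ∀ᵐ (x : ℝ) ∂μ, w (x : AddCircle T) = v x := by
    have h1 : ∀ᵐ x ∂μ, x ∈ Set.Ioc a (a+T) := ae_restrict_mem measurableSet_Ioc
    filter_upwards [h1, hvv'] with x hx hvx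
    rw [hw_comp x hx, ← hvx]
  have hwμ : MemLp (fun x : ℝ => w ↑x) 2 μ := hv.ae_eq (hwmk.mono fun x hx => hx.symm)
  have hwvol : MemLp w 2 (volume : Measure (AddCircle T)) := by
    rw [← hmp.map_eq]
    exact (memLp_map_measure_iff hw_sm.aestronglyMeasurable
      hmp.measurable.aemeasurable).2 hwμ
  have hwhaar : MemLp w 2 (AddCircle.haarAddCircle : Measure (AddCircle T)) := by
    have hkey : (AddCircle.haarAddCircle : Measure (AddCircle T)) =
        (ENNReal.ofReal T)⁻¹ • (volume : Measure (AddCircle T)) := by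
      rw [AddCircle.volume_eq_smul_haarAddCircle, smul_smul,
        ENNReal.inv_mul_cancel (ENNReal.ofReal_pos.2 hT.out).ne' ENNReal.ofReal_ne_top, one_smul]
    rw [hkey]
    exact hwvol.smul_measure (ENNReal.inv_ne_top.2 (ENNReal.ofReal_pos.2 hT.out).ne')
  have hcoeff : ∀ n : ℤ, fourierCoeff w n = 0 := by
    intro n
    rw [fourierCoeff_eq_intervalIntegral w n a]
    have h2 : (∫ x in a..a+T, fourier (-n) (x : AddCircle T) • w ↑x) = 0 := by
      rw [intervalIntegral.integral_of_le (by linarith [hT.out] : a ≤ a + T)]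
      rw [← h (-n)]
      refine integral_congr_ae ?_
      filter_upwards [hwmk] with x hx
      rw [hx, smul_eq_mul, mul_comm]
    rw [h2, smul_zero]
  have hWcoeff : ∀ n : ℤ, fourierBasis.repr (hwhaar.toLp w) n = 0 := by
    intro n
    rw [fourierBasis_repr]
    have h3 : fourierCoeff ((hwhaar.toLp w) : AddCircle T → ℂ) n = fourierCoeff w n := by
      unfold fourierCoeff
      exact integral_congr_ae (by filter_upwards [hwhaar.coeFn_toLp] with x hx; rw [hx])
    rw [h3, hcoeff]
  have hW0 : hwhaar.toLp w = 0 := by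
    have h1 := fourierBasis.hasSum_repr (hwhaar.toLp w)
    have h2 : HasSum (fun i : ℤ => fourierBasis.repr (hwhaar.toLp w) i •
        (fourierBasis i : Lp ℂ 2 (@AddCircle.haarAddCircle T hT))) 0 := by
      have he : (fun i : ℤ => fourierBasis.repr (hwhaar.toLp w) i •
          (fourierBasis i : Lp ℂ 2 (@AddCircle.haarAddCircle T hT))) = fun _ => 0 :=
        funext fun i => by rw [hWcoeff, zero_smul]
      rw [he]; exact hasSum_zero
    exact h1.unique h2
  have hw0 : w =ᵐ[(AddCircle.haarAddCircle : Measure (AddCircle T))] 0 := by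
    refine (hwhaar.coeFn_toLp.symm).trans ?_
    rw [hW0]
    exact Lp.coeFn_zero _ _ _
  have hwvol0 : w =ᵐ[(volume : Measure (AddCircle T))] 0 := by
    rw [AddCircle.volume_eq_smul_haarAddCircle]
    exact Measure.ae_smul_measure hw0 _
  have hfin : ∀ᵐ (x : ℝ) ∂μ, w (x : AddCircle T) = 0 := by
    rw [← hmp.map_eq] at hwvol0
    have hs : MeasurableSet {z : AddCircle T | w z = 0} :=
      hw_sm.measurable (measurableSet_singleton 0)
    exact (ae_map_iff hmp.measurable.aemeasurable hs).1 hwvol0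
  filter_upwards [hfin, hwmk] with x h1 h2
  rw [← h2, h1]

lemma two_dim (τ : ℝ) (hτ : 0 < τ) (u : ℝ × ℝ → ℂ)
    (hu : MemLp u 2 ((volume.restrict (Set.Ioc (-τ) τ)).prod (volume.restrict (Set.Ioc (-τ) τ))))
    (h : ∀ n : ℤ × ℤ, ∫ ω, u ω * (fourier n.1 (ω.1 : AddCircle (2*τ)) *
        fourier n.2 (ω.2 : AddCircle (2*τ)))
        ∂((volume.restrict (Set.Ioc (-τ) τ)).prod (volume.restrict (Set.Ioc (-τ) τ))) = 0) :
    ∀ᵐ ω ∂((volume.restrict (Set.Ioc (-τ) τ)).prod (volume.restrict (Set.Ioc (-τ) τ))),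
      u ω = 0 := by
  haveI : Fact (0 < 2*τ) := ⟨by linarith⟩
  set ν := volume.restrict (Set.Ioc (-τ) τ) with hν
  haveI : IsFiniteMeasure ν := ⟨by rw [hν, Measure.restrict_apply_univ]; exact measure_Ioc_lt_top⟩
  set u' := hu.1.mk u with hu'def
  have hu'sm : StronglyMeasurable u' := hu.1.stronglyMeasurable_mk
  have huu' : u =ᵐ[ν.prod ν] u' := hu.1.ae_eq_mk
  have hu' : MemLp u' 2 (ν.prod ν) := hu.ae_eq huu'
  have hint : Integrable u' (ν.prod ν) := hu'.integrable one_le_two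
  have hsq : Integrable (fun ω => ‖u' ω‖^2) (ν.prod ν) :=
    (memLp_two_iff_integrable_sq_norm hu'sm.aestronglyMeasurable).1 hu'
  have hfc : ∀ (m : ℤ), Continuous fun y : ℝ => fourier m (y : AddCircle (2*τ)) :=
    fun m => (fourier m).continuous.comp continuous_quotient_mk'
  set g : ℤ → ℝ → ℂ := fun m x => ∫ y, u' (x, y) * fourier m (y : AddCircle (2*τ)) ∂ν with hg
  have hgsm : ∀ m : ℤ, StronglyMeasurable (g m) := by
    intro m
    exact StronglyMeasurable.integral_prod_right'
      (f := fun ω : ℝ×ℝ => u' ω * fourier m (ω.2 : AddCircle (2*τ)))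
      (hu'sm.mul (((hfc m).comp continuous_snd).stronglyMeasurable))
  have hint2 : ∀ n : ℤ × ℤ, Integrable (fun ω : ℝ×ℝ =>
      u' ω * (fourier n.1 (ω.1 : AddCircle (2*τ)) * fourier n.2 (ω.2 : AddCircle (2*τ))))
      (ν.prod ν) := by
    intro n
    refine hint.norm.mono' (hu'sm.aestronglyMeasurable.mul ((((hfc n.1).comp continuous_fst).mul
      ((hfc n.2).comp continuous_snd)).aestronglyMeasurable)) ?_
    refine Filter.Eventually.of_forall fun ω => ?_
    rw [norm_mul, norm_mul, fourier_norm_one, fourier_norm_one]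
    simp
  have hsect : ∀ᵐ x ∂ν, Integrable (fun y => ‖u' (x, y)‖^2) ν := hsq.prod_right_ae
  have hsectℒp : ∀ᵐ x ∂ν, MemLp (fun y => u' (x, y)) 2 ν := by
    filter_upwards [hsect] with x hx
    exact (memLp_two_iff_integrable_sq_norm
      ((hu'sm.comp_measurable measurable_prodMk_left).aestronglyMeasurable)).2 hx
  have hgℒp : ∀ m : ℤ, MemLp (g m) 2 ν := by
    intro m
    rw [memLp_two_iff_integrable_sq_norm (hgsm m).aestronglyMeasurable]
    refine Integrable.mono' ((hsq.integral_prod_left).const_mul ((ν Set.univ).toReal))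
      ((continuous_pow 2).comp_stronglyMeasurable (hgsm m).norm).aestronglyMeasurable ?_
    filter_upwards [hsect, hsectℒp] with x hx hxp
    have hA : (0:ℝ) ≤ ∫ y, ‖u' (x, y)‖^2 ∂ν := integral_nonneg fun y => sq_nonneg _
    have h1 : ‖g m x‖ ≤ ∫ y, ‖u' (x, y)‖ ∂ν := by
      refine le_trans (norm_integral_le_integral_norm _) (le_of_eq (integral_congr_ae
        (Filter.Eventually.of_forall fun y => ?_)))
      show ‖u' (x, y) * fourier m (y : AddCircle (2*τ))‖ = ‖u' (x, y)‖
      rw [norm_mul, fourier_norm_one, mul_one]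
    have h2 : ∫ y, ‖u' (x, y)‖ ∂ν ≤
        (∫ y, ‖u' (x, y)‖^2 ∂ν) ^ (1/2:ℝ) * (∫ _y, (1:ℝ)^2 ∂ν) ^ (1/2:ℝ) := by
      have := integral_mul_le_Lp_mul_Lq_of_nonneg (μ := ν)
        (f := fun y => ‖u' (x, y)‖) (g := fun _ => (1:ℝ))
        (Real.HolderConjugate.two_two : Real.HolderConjugate 2 2)
        (Filter.Eventually.of_forall fun y => norm_nonneg _)
        (Filter.Eventually.of_forall fun _ => zero_le_one)
        (by norm_num; exact hxp.norm) (by norm_num; exact memLp_const 1)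
      simpa using this
    have h3 : (∫ _y, (1:ℝ)^2 ∂ν) = (ν Set.univ).toReal := by simp [Measure.real]
    have h4 : ‖g m x‖ ≤ (∫ y, ‖u' (x, y)‖^2 ∂ν) ^ (1/2:ℝ) * ((ν Set.univ).toReal) ^ (1/2:ℝ) := by
      rw [h3] at h2; exact h1.trans h2
    have h5 : ‖g m x‖^2 ≤ ((∫ y, ‖u' (x, y)‖^2 ∂ν) ^ (1/2:ℝ) *
        ((ν Set.univ).toReal) ^ (1/2:ℝ))^2 :=
      pow_le_pow_left₀ (norm_nonneg _) h4 2
    calc ‖‖g m x‖^2‖ = ‖g m x‖^2 := by rw [Real.norm_of_nonneg (sq_nonneg _)]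
      _ ≤ _ := h5
      _ = (ν Set.univ).toReal * ∫ y, ‖u' (x, y)‖^2 ∂ν := by
          rw [mul_pow, ← Real.rpow_natCast ((∫ y, ‖u' (x, y)‖^2 ∂ν) ^ (1/2:ℝ)) 2,
            ← Real.rpow_natCast (((ν Set.univ).toReal) ^ (1/2:ℝ)) 2,
            ← Real.rpow_mul hA, ← Real.rpow_mul ENNReal.toReal_nonneg]
          norm_num [mul_comm]
  have hgzero : ∀ m n₁ : ℤ, ∫ x, g m x * fourier n₁ (x : AddCircle (2*τ)) ∂ν = 0 := by
    intro m n₁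
    have h0' : ∫ ω, u' ω * (fourier n₁ (ω.1 : AddCircle (2*τ)) *
        fourier m (ω.2 : AddCircle (2*τ))) ∂(ν.prod ν) = 0 := by
      rw [← h (n₁, m)]
      exact integral_congr_ae (by filter_upwards [huu'] with ω hω; rw [hω])
    rw [integral_prod _ (hint2 (n₁, m))] at h0'
    rw [← h0']
    refine integral_congr_ae (Filter.Eventually.of_forall fun x => ?_)
    rw [hg]
    simp only
    rw [← integral_mul_const]
    exact integral_congr_ae (Filter.Eventually.of_forall fun y => by ring)
  have e : -τ + 2*τ = τ := by ring
  have hgz : ∀ m : ℤ, ∀ᵐ x ∂ν, g m x = 0 := by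
    intro m
    have h1 := one_dim (2*τ) (-τ) (g m) (by rw [e]; exact hgℒp m)
      (by rw [e]; exact fun n => hgzero m n)
    rw [e] at h1; exact h1
  have key : ∀ᵐ x ∂ν, ∀ᵐ y ∂ν, u' (x, y) = 0 := by
    have hae : ∀ᵐ x ∂ν, ∀ m : ℤ, g m x = 0 := ae_all_iff.2 hgz
    filter_upwards [hae, hsectℒp] with x hx hxp
    have h1 := one_dim (2*τ) (-τ) (fun y => u' (x, y)) (by rw [e]; exact hxp)
      (by rw [e]; exact fun m => hx m)
    rw [e] at h1; exact h1
  have hs : MeasurableSet {ω : ℝ×ℝ | ¬ u' ω = 0} :=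
    (hu'sm.measurable (measurableSet_singleton 0)).compl
  have hnull : (ν.prod ν) {ω : ℝ×ℝ | ¬ u' ω = 0} = 0 := by
    rw [Measure.measure_prod_null hs]
    filter_upwards [key] with x hx
    have : (Prod.mk x ⁻¹' {ω : ℝ×ℝ | ¬ u' ω = 0}) = {y | ¬ u' (x, y) = 0} := rfl
    rw [this]
    exact ae_iff.1 hx
  have h0 : ∀ᵐ ω ∂ν.prod ν, u' ω = 0 := ae_iff.2 hnull
  filter_upwards [huu', h0] with ω h1 h2
  rw [h1, h2]

lemma hPq_cont : Continuous fun p : ℝ × ℝ => Pq p.1 p.2 := by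
  unfold Pq
  exact ((Quaternion.continuous_coe.comp (Real.continuous_cos.comp continuous_fst)).add
    ((Real.continuous_sin.comp continuous_fst).smul continuous_const)).mul
    ((Quaternion.continuous_coe.comp (Real.continuous_cos.comp continuous_snd)).add
    ((Real.continuous_sin.comp continuous_snd).smul continuous_const))

lemma quat_combo {μ : Measure (ℝ × ℝ)} {F : ℝ × ℝ → Quaternion ℝ} (a b : ℝ × ℝ → ℝ)
    (hac : Continuous a) (hbc : Continuous b) (hFi : Integrable F μ)
    (J1 : ∫ ω, F ω * Pq (a ω) (b ω) ∂μ = 0) (J2 : ∫ ω, F ω * Pq (a ω) (-(b ω)) ∂μ = 0)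
    (J3 : ∫ ω, F ω * Pq (-(a ω)) (b ω) ∂μ = 0)
    (J4 : ∫ ω, F ω * Pq (-(a ω)) (-(b ω)) ∂μ = 0) :
    (∫ ω, Real.cos (a ω + b ω) • F ω ∂μ = 0) ∧ (∫ ω, Real.sin (a ω + b ω) • F ω ∂μ = 0) := by
  have hIntP : ∀ (α β : ℝ × ℝ → ℝ), Continuous α → Continuous β →
      Integrable (fun ω => F ω * Pq (α ω) (β ω)) μ := by
    intro α β hα hβ
    refine (hFi.norm.const_mul 4).mono'
      (hFi.1.mul ((hPq_cont.comp (hα.prodMk hβ)).aestronglyMeasurable))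
      (Filter.Eventually.of_forall fun ω => ?_)
    rw [norm_mul]
    calc ‖F ω‖ * ‖Pq (α ω) (β ω)‖ ≤ ‖F ω‖ * 4 :=
          mul_le_mul_of_nonneg_left (norm_Pq_le _ _) (norm_nonneg _)
      _ = 4 * ‖F ω‖ := mul_comm _ _
  have hbnd : ∀ (c : ℝ × ℝ → ℝ), Continuous c → (∀ ω, |c ω| ≤ 4) →
      Integrable (fun ω => c ω • F ω) μ := by
    intro c hc hb
    refine (hFi.norm.const_mul 4).mono' (hc.aestronglyMeasurable.smul hFi.1)
      (Filter.Eventually.of_forall fun ω => ?_)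
    rw [norm_smul, Real.norm_eq_abs]
    exact mul_le_mul_of_nonneg_right (hb ω) (norm_nonneg _)
  have I1 : Integrable (fun ω => F ω * Pq (a ω) (b ω)) μ := hIntP a b hac hbc
  have I2 : Integrable (fun ω => F ω * Pq (a ω) (-(b ω))) μ :=
    hIntP a (fun ω => -(b ω)) hac hbc.neg
  have I3 : Integrable (fun ω => F ω * Pq (-(a ω)) (b ω)) μ :=
    hIntP (fun ω => -(a ω)) b hac.neg hbc
  have I4 : Integrable (fun ω => F ω * Pq (-(a ω)) (-(b ω))) μ :=
    hIntP (fun ω => -(a ω)) (fun ω => -(b ω)) hac.neg hbc.neg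
  have Ipp : Integrable (fun ω => F ω * Pq (a ω) (b ω) + F ω * Pq (a ω) (-(b ω))) μ := I1.add I2
  have Imm : Integrable (fun ω => F ω * Pq (a ω) (b ω) - F ω * Pq (a ω) (-(b ω))) μ := I1.sub I2
  have Ipp3 : Integrable (fun ω => F ω * Pq (a ω) (b ω) + F ω * Pq (a ω) (-(b ω)) +
    F ω * Pq (-(a ω)) (b ω)) μ := Ipp.add I3
  have Ipm3 : Integrable (fun ω => F ω * Pq (a ω) (b ω) + F ω * Pq (a ω) (-(b ω)) -
    F ω * Pq (-(a ω)) (b ω)) μ := Ipp.sub I3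
  have Imp3 : Integrable (fun ω => F ω * Pq (a ω) (b ω) - F ω * Pq (a ω) (-(b ω)) +
    F ω * Pq (-(a ω)) (b ω)) μ := Imm.add I3
  have Imm3 : Integrable (fun ω => F ω * Pq (a ω) (b ω) - F ω * Pq (a ω) (-(b ω)) -
    F ω * Pq (-(a ω)) (b ω)) μ := Imm.sub I3
  have hb_cc : ∀ ω, |4 * (Real.cos (a ω) * Real.cos (b ω))| ≤ 4 := by
    intro ω
    rw [abs_mul, abs_mul]
    have h1 := Real.abs_cos_le_one (a ω); have h2 := Real.abs_cos_le_one (b ω)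
    have h3 := abs_nonneg (Real.cos (a ω)); have h4 := abs_nonneg (Real.cos (b ω))
    rw [abs_of_nonneg (by norm_num : (0:ℝ) ≤ 4)]
    nlinarith
  have hb_cs : ∀ ω, |4 * (Real.cos (a ω) * Real.sin (b ω))| ≤ 4 := by
    intro ω
    rw [abs_mul, abs_mul]
    have h1 := Real.abs_cos_le_one (a ω); have h2 := Real.abs_sin_le_one (b ω)
    have h3 := abs_nonneg (Real.cos (a ω)); have h4 := abs_nonneg (Real.sin (b ω))
    rw [abs_of_nonneg (by norm_num : (0:ℝ) ≤ 4)]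
    nlinarith
  have hb_sc : ∀ ω, |4 * (Real.sin (a ω) * Real.cos (b ω))| ≤ 4 := by
    intro ω
    rw [abs_mul, abs_mul]
    have h1 := Real.abs_sin_le_one (a ω); have h2 := Real.abs_cos_le_one (b ω)
    have h3 := abs_nonneg (Real.sin (a ω)); have h4 := abs_nonneg (Real.cos (b ω))
    rw [abs_of_nonneg (by norm_num : (0:ℝ) ≤ 4)]
    nlinarith
  have hb_ss : ∀ ω, |4 * (Real.sin (a ω) * Real.sin (b ω))| ≤ 4 := by
    intro ω
    rw [abs_mul, abs_mul]
    have h1 := Real.abs_sin_le_one (a ω); have h2 := Real.abs_sin_le_one (b ω)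
    have h3 := abs_nonneg (Real.sin (a ω)); have h4 := abs_nonneg (Real.sin (b ω))
    rw [abs_of_nonneg (by norm_num : (0:ℝ) ≤ 4)]
    nlinarith
  have hci_cc : Integrable (fun ω => (4 * (Real.cos (a ω) * Real.cos (b ω))) • F ω) μ :=
    hbnd _ (continuous_const.mul ((Real.continuous_cos.comp hac).mul
      (Real.continuous_cos.comp hbc))) hb_cc
  have hci_cs : Integrable (fun ω => (4 * (Real.cos (a ω) * Real.sin (b ω))) • F ω) μ :=
    hbnd _ (continuous_const.mul ((Real.continuous_cos.comp hac).mul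
      (Real.continuous_sin.comp hbc))) hb_cs
  have hci_sc : Integrable (fun ω => (4 * (Real.sin (a ω) * Real.cos (b ω))) • F ω) μ :=
    hbnd _ (continuous_const.mul ((Real.continuous_sin.comp hac).mul
      (Real.continuous_cos.comp hbc))) hb_sc
  have hci_ss : Integrable (fun ω => (4 * (Real.sin (a ω) * Real.sin (b ω))) • F ω) μ :=
    hbnd _ (continuous_const.mul ((Real.continuous_sin.comp hac).mul
      (Real.continuous_sin.comp hbc))) hb_ss
  have hcc4 : ∫ ω, (4 * (Real.cos (a ω) * Real.cos (b ω))) • F ω ∂μ = 0 := by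
    have hrw : (fun ω => (4 * (Real.cos (a ω) * Real.cos (b ω))) • F ω) = fun ω =>
        F ω * Pq (a ω) (b ω) + F ω * Pq (a ω) (-(b ω)) + F ω * Pq (-(a ω)) (b ω) +
          F ω * Pq (-(a ω)) (-(b ω)) :=
      funext fun ω => (Pq_cc (F ω) (a ω) (b ω)).symm
    rw [hrw, integral_add Ipp3 I4, integral_add Ipp I3, integral_add I1 I2, J1, J2, J3, J4]
    simp
  have hcs4 : ∫ ω, (4 * (Real.cos (a ω) * Real.sin (b ω))) • F ω ∂μ = 0 := by
    have hrw : (fun ω => ((4 * (Real.cos (a ω) * Real.sin (b ω))) • F ω) * qi) = fun ω =>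
        F ω * Pq (a ω) (b ω) - F ω * Pq (a ω) (-(b ω)) + F ω * Pq (-(a ω)) (b ω) -
          F ω * Pq (-(a ω)) (-(b ω)) :=
      funext fun ω => (Pq_cs (F ω) (a ω) (b ω)).symm
    have h2 : ∫ ω, ((4 * (Real.cos (a ω) * Real.sin (b ω))) • F ω) * qi ∂μ =
        (∫ ω, (4 * (Real.cos (a ω) * Real.sin (b ω))) • F ω ∂μ) * qi :=
      (mulRightCLM qi).integral_comp_comm hci_cs
    have h3 : ∫ ω, ((4 * (Real.cos (a ω) * Real.sin (b ω))) • F ω) * qi ∂μ = 0 := by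
      rw [hrw, integral_sub Imp3 I4, integral_add Imm I3, integral_sub I1 I2, J1, J2, J3, J4]
      simp
    have h4 : (∫ ω, (4 * (Real.cos (a ω) * Real.sin (b ω))) • F ω ∂μ) * qi = 0 := by
      rw [← h2]; exact h3
    exact (mul_eq_zero.mp h4).resolve_right qi_ne_zero
  have hsc4 : ∫ ω, (4 * (Real.sin (a ω) * Real.cos (b ω))) • F ω ∂μ = 0 := by
    have hrw : (fun ω => ((4 * (Real.sin (a ω) * Real.cos (b ω))) • F ω) * qj) = fun ω =>
        F ω * Pq (a ω) (b ω) + F ω * Pq (a ω) (-(b ω)) - F ω * Pq (-(a ω)) (b ω) -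
          F ω * Pq (-(a ω)) (-(b ω)) :=
      funext fun ω => (Pq_sc (F ω) (a ω) (b ω)).symm
    have h2 : ∫ ω, ((4 * (Real.sin (a ω) * Real.cos (b ω))) • F ω) * qj ∂μ =
        (∫ ω, (4 * (Real.sin (a ω) * Real.cos (b ω))) • F ω ∂μ) * qj :=
      (mulRightCLM qj).integral_comp_comm hci_sc
    have h3 : ∫ ω, ((4 * (Real.sin (a ω) * Real.cos (b ω))) • F ω) * qj ∂μ = 0 := by
      rw [hrw, integral_sub Ipm3 I4, integral_sub Ipp I3, integral_add I1 I2, J1, J2, J3, J4]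
      simp
    have h4 : (∫ ω, (4 * (Real.sin (a ω) * Real.cos (b ω))) • F ω ∂μ) * qj = 0 := by
      rw [← h2]; exact h3
    exact (mul_eq_zero.mp h4).resolve_right qj_ne_zero
  have hss4 : ∫ ω, (4 * (Real.sin (a ω) * Real.sin (b ω))) • F ω ∂μ = 0 := by
    have hrw : (fun ω => ((4 * (Real.sin (a ω) * Real.sin (b ω))) • F ω) * (qj * qi)) = fun ω =>
        F ω * Pq (a ω) (b ω) - F ω * Pq (a ω) (-(b ω)) - F ω * Pq (-(a ω)) (b ω) +
          F ω * Pq (-(a ω)) (-(b ω)) :=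
      funext fun ω => (Pq_ss (F ω) (a ω) (b ω)).symm
    have h2 : ∫ ω, ((4 * (Real.sin (a ω) * Real.sin (b ω))) • F ω) * (qj * qi) ∂μ =
        (∫ ω, (4 * (Real.sin (a ω) * Real.sin (b ω))) • F ω ∂μ) * (qj * qi) :=
      (mulRightCLM (qj * qi)).integral_comp_comm hci_ss
    have h3 : ∫ ω, ((4 * (Real.sin (a ω) * Real.sin (b ω))) • F ω) * (qj * qi) ∂μ = 0 := by
      rw [hrw, integral_add Imm3 I4, integral_sub Imm I3, integral_sub I1 I2, J1, J2, J3, J4]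
      simp
    have h4 : (∫ ω, (4 * (Real.sin (a ω) * Real.sin (b ω))) • F ω ∂μ) * (qj * qi) = 0 := by
      rw [← h2]; exact h3
    exact (mul_eq_zero.mp h4).resolve_right qjqi_ne_zero
  constructor
  · have hrw : (fun ω => Real.cos (a ω + b ω) • F ω) = fun ω =>
        (4:ℝ)⁻¹ • ((4 * (Real.cos (a ω) * Real.cos (b ω))) • F ω -
          (4 * (Real.sin (a ω) * Real.sin (b ω))) • F ω) := by
      funext ω
      rw [Real.cos_add, ← sub_smul, smul_smul]
      congr 1
      ring
    rw [hrw, integral_smul, integral_sub hci_cc hci_ss, hcc4, hss4]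
    simp
  · have hrw : (fun ω => Real.sin (a ω + b ω) • F ω) = fun ω =>
        (4:ℝ)⁻¹ • ((4 * (Real.sin (a ω) * Real.cos (b ω))) • F ω +
          (4 * (Real.cos (a ω) * Real.sin (b ω))) • F ω) := by
      funext ω
      rw [Real.sin_add, ← add_smul, smul_smul]
      congr 1
      ring
    rw [hrw, integral_smul, integral_add hci_sc hci_cs, hsc4, hcs4]
    simp


lemma integral_complex_ofReal' {α : Type*} [MeasurableSpace α] {μ : Measure α} (f : α → ℝ) :
    ∫ x, ((f x : ℝ) : ℂ) ∂μ = ((∫ x, f x ∂μ : ℝ) : ℂ) :=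
  integral_ofReal

/-- Completeness of the exponential system in `L²([-τ,τ]², ℍ)`: if all the modified
quaternionic Fourier coefficients of `F` vanish, then `F = 0` a.e. on `[-τ,τ]²`. -/
theorem Efun_complete (τ : ℝ) (hτ : 0 < τ) (F : ℝ × ℝ → Quaternion ℝ)
    (hF : MemLp F 2 (volume.restrict (Set.Icc (-τ) τ ×ˢ Set.Icc (-τ) τ)))
    (h : ∀ n : ℤ × ℤ,
      (∫ ω in (Set.Icc (-τ) τ ×ˢ Set.Icc (-τ) τ),
        F ω * NormedSpace.exp ((π * (n.2 : ℝ) * ω.2 / τ) • qj) *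
          NormedSpace.exp ((π * (n.1 : ℝ) * ω.1 / τ) • qi)) = 0) :
    ∀ᵐ ω ∂(volume.restrict (Set.Icc (-τ) τ ×ˢ Set.Icc (-τ) τ)), F ω = 0 := by
  haveI : Fact (0 < 2*τ) := ⟨by linarith⟩
  have hτ0 : τ ≠ 0 := ne_of_gt hτ
  set ν := volume.restrict (Set.Ioc (-τ) τ) with hν
  set μ := volume.restrict (Set.Icc (-τ) τ ×ˢ Set.Icc (-τ) τ) with hμ
  haveI : IsFiniteMeasure μ := ⟨by
    rw [hμ, Measure.restrict_apply_univ]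
    exact (isCompact_Icc.prod isCompact_Icc).measure_lt_top⟩
  have hFi : Integrable F μ := hF.integrable one_le_two
  have meas_eq : μ = ν.prod ν := by
    rw [hμ, hν, Measure.prod_restrict, ← Measure.volume_eq_prod]
    refine Measure.restrict_congr_set (MeasureTheory.ae_eq_set.2 ⟨?_, ?_⟩)
    · refine measure_mono_null (t := (({-τ} : Set ℝ) ×ˢ (Set.univ : Set ℝ)) ∪
        ((Set.univ : Set ℝ) ×ˢ ({-τ} : Set ℝ))) ?_ ?_
      · rintro ω ⟨⟨hx, hy⟩, hn⟩
        by_cases hx1 : ω.1 = -τ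
        · exact Or.inl ⟨hx1, trivial⟩
        · have hx' : ω.1 ∈ Set.Ioc (-τ) τ := ⟨lt_of_le_of_ne hx.1 (Ne.symm hx1), hx.2⟩
          by_cases hy1 : ω.2 = -τ
          · exact Or.inr ⟨trivial, hy1⟩
          · exact absurd ⟨hx', ⟨lt_of_le_of_ne hy.1 (Ne.symm hy1), hy.2⟩⟩ hn
      · refine measure_union_null ?_ ?_
        · rw [Measure.volume_eq_prod, Measure.prod_prod, Real.volume_singleton, zero_mul]
        · rw [Measure.volume_eq_prod, Measure.prod_prod, Real.volume_singleton, mul_zero]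
    · rw [Set.diff_eq_empty.2 (Set.prod_mono Set.Ioc_subset_Icc_self Set.Ioc_subset_Icc_self),
        measure_empty]
  have hJ : ∀ n : ℤ × ℤ,
      (∫ ω, F ω * Pq (π * (n.2:ℝ) * ω.2 / τ) (π * (n.1:ℝ) * ω.1 / τ) ∂μ) = 0 := by
    intro n
    rw [← h n]
    congr 1
    funext ω
    rw [q_exp_j, q_exp_i]
    unfold Pq
    rw [← mul_assoc]
  have hJr : ∀ (r s : ℝ), (∃ p : ℤ, r = p) → (∃ q : ℤ, s = q) →
      (∫ ω, F ω * Pq (π * s * ω.2 / τ) (π * r * ω.1 / τ) ∂μ) = 0 := by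
    rintro r s ⟨p, rfl⟩ ⟨q, rfl⟩
    exact hJ (p, q)
  have hkey : ∀ n : ℤ × ℤ,
      (∫ ω, Real.cos (π * (n.2:ℝ) * ω.2 / τ + π * (n.1:ℝ) * ω.1 / τ) • F ω ∂μ = 0) ∧
      (∫ ω, Real.sin (π * (n.2:ℝ) * ω.2 / τ + π * (n.1:ℝ) * ω.1 / τ) • F ω ∂μ = 0) := by
    intro n
    have J2 : ∫ ω, F ω * Pq (π * (n.2:ℝ) * ω.2 / τ) (-(π * (n.1:ℝ) * ω.1 / τ)) ∂μ = 0 := by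
      rw [← hJr (-(n.1:ℝ)) (n.2:ℝ) ⟨-n.1, by push_cast; ring⟩ ⟨n.2, rfl⟩]
      congr 1
      funext ω
      rw [show π * -(n.1:ℝ) * ω.1 / τ = -(π * (n.1:ℝ) * ω.1 / τ) by ring]
    have J3 : ∫ ω, F ω * Pq (-(π * (n.2:ℝ) * ω.2 / τ)) (π * (n.1:ℝ) * ω.1 / τ) ∂μ = 0 := by
      rw [← hJr (n.1:ℝ) (-(n.2:ℝ)) ⟨n.1, rfl⟩ ⟨-n.2, by push_cast; ring⟩]
      congr 1
      funext ω
      rw [show π * -(n.2:ℝ) * ω.2 / τ = -(π * (n.2:ℝ) * ω.2 / τ) by ring]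
    have J4 : ∫ ω, F ω * Pq (-(π * (n.2:ℝ) * ω.2 / τ)) (-(π * (n.1:ℝ) * ω.1 / τ)) ∂μ = 0 := by
      rw [← hJr (-(n.1:ℝ)) (-(n.2:ℝ)) ⟨-n.1, by push_cast; ring⟩ ⟨-n.2, by push_cast; ring⟩]
      congr 1
      funext ω
      rw [show π * -(n.1:ℝ) * ω.1 / τ = -(π * (n.1:ℝ) * ω.1 / τ) by ring,
        show π * -(n.2:ℝ) * ω.2 / τ = -(π * (n.2:ℝ) * ω.2 / τ) by ring]
    exact quat_combo (fun ω => π * (n.2:ℝ) * ω.2 / τ) (fun ω => π * (n.1:ℝ) * ω.1 / τ)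
      (by fun_prop) (by fun_prop) hFi (hJ n) J2 J3 J4
  have hbnd : ∀ (c : ℝ × ℝ → ℝ), Continuous c → (∀ ω, |c ω| ≤ 4) →
      Integrable (fun ω => c ω • F ω) μ := by
    intro c hc hb
    refine (hFi.norm.const_mul 4).mono' (hc.aestronglyMeasurable.smul hF.1)
      (Filter.Eventually.of_forall fun ω => ?_)
    rw [norm_smul, Real.norm_eq_abs]
    exact mul_le_mul_of_nonneg_right (hb ω) (norm_nonneg _)
  have hφ : ∀ (φ : Quaternion ℝ →L[ℝ] ℝ), ∀ᵐ ω ∂μ, φ (F ω) = 0 := by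
    intro φ
    have hcomp : ∀ (c : ℝ × ℝ → ℝ), Integrable (fun ω => c ω • F ω) μ →
        (∫ ω, c ω • F ω ∂μ) = 0 → (∫ ω, φ (F ω) * c ω ∂μ) = 0 := by
      intro c hci h0
      have h1 := φ.integral_comp_comm hci
      rw [h0, map_zero] at h1
      rw [← h1]
      refine integral_congr_ae (Filter.Eventually.of_forall fun ω => ?_)
      show φ (F ω) * c ω = φ (c ω • F ω)
      rw [φ.map_smul, smul_eq_mul, mul_comm]
    have hu2 : ∀ n : ℤ × ℤ, ∫ ω, ((φ (F ω) : ℝ) : ℂ) *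
        (fourier n.1 (ω.1 : AddCircle (2*τ)) * fourier n.2 (ω.2 : AddCircle (2*τ))) ∂μ = 0 := by
      intro n
      have hicos : Integrable (fun ω : ℝ × ℝ =>
          Real.cos (π * (n.2:ℝ) * ω.2 / τ + π * (n.1:ℝ) * ω.1 / τ) • F ω) μ :=
        hbnd _ (by fun_prop) (fun ω => (Real.abs_cos_le_one _).trans (by norm_num))
      have hisin : Integrable (fun ω : ℝ × ℝ =>
          Real.sin (π * (n.2:ℝ) * ω.2 / τ + π * (n.1:ℝ) * ω.1 / τ) • F ω) μ :=
        hbnd _ (by fun_prop) (fun ω => (Real.abs_sin_le_one _).trans (by norm_num))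
      have ecos := hcomp _ hicos (hkey n).1
      have esin := hcomp _ hisin (hkey n).2
      have hrc : Integrable (fun ω : ℝ × ℝ =>
          φ (F ω) * Real.cos (π * (n.2:ℝ) * ω.2 / τ + π * (n.1:ℝ) * ω.1 / τ)) μ := by
        refine (φ.integrable_comp hicos).congr (Filter.Eventually.of_forall fun ω => ?_)
        show φ (Real.cos (π * (n.2:ℝ) * ω.2 / τ + π * (n.1:ℝ) * ω.1 / τ) • F ω) =
          φ (F ω) * Real.cos (π * (n.2:ℝ) * ω.2 / τ + π * (n.1:ℝ) * ω.1 / τ)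
        rw [φ.map_smul, smul_eq_mul, mul_comm]
      have hrs : Integrable (fun ω : ℝ × ℝ =>
          φ (F ω) * Real.sin (π * (n.2:ℝ) * ω.2 / τ + π * (n.1:ℝ) * ω.1 / τ)) μ := by
        refine (φ.integrable_comp hisin).congr (Filter.Eventually.of_forall fun ω => ?_)
        show φ (Real.sin (π * (n.2:ℝ) * ω.2 / τ + π * (n.1:ℝ) * ω.1 / τ) • F ω) =
          φ (F ω) * Real.sin (π * (n.2:ℝ) * ω.2 / τ + π * (n.1:ℝ) * ω.1 / τ)
        rw [φ.map_smul, smul_eq_mul, mul_comm]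
      have hE : ∀ ω : ℝ × ℝ, (fourier n.1 (ω.1 : AddCircle (2*τ)) *
          fourier n.2 (ω.2 : AddCircle (2*τ)) : ℂ) =
          ((Real.cos (π * (n.2:ℝ) * ω.2 / τ + π * (n.1:ℝ) * ω.1 / τ) : ℝ) : ℂ) +
          ((Real.sin (π * (n.2:ℝ) * ω.2 / τ + π * (n.1:ℝ) * ω.1 / τ) : ℝ) : ℂ) * Complex.I := by
        intro ω
        rw [fourier_coe_apply, fourier_coe_apply, ← Complex.exp_add, Complex.ofReal_cos,
          Complex.ofReal_sin, ← Complex.exp_mul_I]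
        congr 1
        have hτC : (τ:ℂ) ≠ 0 := Complex.ofReal_ne_zero.2 hτ0
        push_cast
        field_simp
        ring
      calc ∫ ω, ((φ (F ω) : ℝ) : ℂ) *
            (fourier n.1 (ω.1 : AddCircle (2*τ)) * fourier n.2 (ω.2 : AddCircle (2*τ))) ∂μ
          = ∫ ω, ((φ (F ω) * Real.cos (π * (n.2:ℝ) * ω.2 / τ + π * (n.1:ℝ) * ω.1 / τ) : ℝ) : ℂ) +
            ((φ (F ω) * Real.sin (π * (n.2:ℝ) * ω.2 / τ + π * (n.1:ℝ) * ω.1 / τ) : ℝ) : ℂ) *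
              Complex.I ∂μ := by
            congr 1
            funext ω
            rw [hE ω]
            push_cast
            ring
        _ = 0 := by
            have hrcC : Integrable (fun ω : ℝ × ℝ =>
                ((φ (F ω) * Real.cos (π * (n.2:ℝ) * ω.2 / τ + π * (n.1:ℝ) * ω.1 / τ) : ℝ) : ℂ)) μ :=
              hrc.ofReal
            have hrsCI : Integrable (fun ω : ℝ × ℝ =>
                ((φ (F ω) * Real.sin (π * (n.2:ℝ) * ω.2 / τ + π * (n.1:ℝ) * ω.1 / τ) : ℝ) : ℂ) *
                  Complex.I) μ := hrs.ofReal.mul_const Complex.I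
            rw [integral_add hrcC hrsCI, integral_mul_const, integral_complex_ofReal',
              integral_complex_ofReal', ecos, esin]
            simp
    have huℒp : MemLp (fun ω : ℝ × ℝ => ((φ (F ω) : ℝ) : ℂ)) 2 μ :=
      (Complex.ofRealCLM.comp φ).comp_memLp' hF
    rw [meas_eq] at hu2 huℒp
    have hres := two_dim τ hτ _ huℒp hu2
    rw [← meas_eq] at hres
    filter_upwards [hres] with ω hω
    exact_mod_cast hω
  filter_upwards [hφ reCLM, hφ imICLM, hφ imJCLM, hφ imKCLM] with ω e1 e2 e3 e4
  have h1 : (F ω).re = 0 := e1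
  have h2 : (F ω).imI = 0 := e2
  have h3 : (F ω).imJ = 0 := e3
  have h4 : (F ω).imK = 0 := e4
  ext <;> simp [h1, h2, h3, h4, Quaternion.re_zero, Quaternion.imI_zero, Quaternion.imJ_zero, Quaternion.imK_zero]
end
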